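/- On the punctured unit disk Δ*, there exists δ > 0 such that the quotient invariant m_{Δ*}(z) = s_{Δ*}(z)/e_{Δ*}(z) satisfies m_{Δ*}(z) < 1 for all z with 0 < |z| < δ; moreover, m_{Δ*}(z) → 0 as z → 0. -/

import Mathlib

open Set Metric

noncomputable section

/-- Inverse hyperbolic tangent. -/
def artanh (x : ℝ) : ℝ := (1/2) * Real.log ((1 + x) / (1 - x))

/-- Poincaré distance on the unit disk. -/
def poincare (a b : ℂ) : ℝ := artanh ‖(a - b) / (1 - (starRingEnd ℂ) a * b)‖

variable {E : Type*} [NormedAddCommGroup E] [NormedSpace ℂ E]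

/-- The Lempert function of a domain `D`. -/
def lempert (D : Set E) (z w : E) : ℝ :=
  sInf { r | ∃ (φ : ℂ → E) (α : ℂ), DifferentiableOn ℂ φ (ball 0 1) ∧
    MapsTo φ (ball 0 1) D ∧ φ 0 = z ∧ α ∈ ball (0:ℂ) 1 ∧ φ α = w ∧
    r = artanh ‖α‖ }

/-- The Kobayashi pseudodistance of a domain `D`, as the infimum over chains of
analytic disks of the sum of the corresponding Poincaré lengths. -/
def kobayashi (D : Set E) (z w : E) : ℝ :=
  sInf { s | ∃ (n : ℕ) (p : ℕ → E), p 0 = z ∧ p n = w ∧ (∀ i ≤ n, p i ∈ D) ∧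
    s = ∑ i ∈ Finset.range n, lempert D (p i) (p (i+1)) }

/-- The Kobayashi ball of radius `r` centered at `z` in `D`. -/
def kobayashiBall (D : Set E) (z : E) (r : ℝ) : Set E := { w ∈ D | kobayashi D z w < r }

/-- The Carathéodory pseudodistance of a domain `D`. -/
def caratheodory (D : Set E) (z w : E) : ℝ :=
  sSup { r | ∃ f : E → ℂ, DifferentiableOn ℂ f D ∧ MapsTo f D (ball 0 1) ∧
    r = poincare (f z) (f w) }

/-- The Carathéodory ball of radius `r` centered at `z` in `D`. -/
def caratheodoryBall (D : Set E) (z : E) (r : ℝ) : Set E := { w ∈ D | caratheodory D z w < r }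

/-- The squeezing function of a domain `D ⊆ E` (with respect to the unit ball of `E`). -/
def squeezing (D : Set E) (z : E) : ℝ :=
  sSup { r | ∃ f : E → E, DifferentiableOn ℂ f D ∧ InjOn f D ∧ MapsTo f D (ball 0 1) ∧
    f z = 0 ∧ ball (0:E) r ⊆ f '' D }

/-- The Fridman invariant of a domain `D ⊆ E` (with respect to the unit ball of `E`). -/
def fridman (D : Set E) (z : E) : ℝ :=
  sSup { t | ∃ r > (0:ℝ), ∃ f : E → E, DifferentiableOn ℂ f (ball 0 1) ∧
    InjOn f (ball 0 1) ∧ MapsTo f (ball 0 1) D ∧ f 0 = z ∧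
    kobayashiBall D z r ⊆ f '' (ball 0 1) ∧ t = Real.tanh r }

/-- The Fridman invariant defined via Carathéodory balls. -/
def fridmanC (D : Set E) (z : E) : ℝ :=
  sSup { t | ∃ r > (0:ℝ), ∃ f : E → E, DifferentiableOn ℂ f (ball 0 1) ∧
    InjOn f (ball 0 1) ∧ MapsTo f (ball 0 1) D ∧ f 0 = z ∧
    caratheodoryBall D z r ⊆ f '' (ball 0 1) ∧ t = Real.tanh r }

/-- A set is balanced if `λ • z ∈ D` whenever `z ∈ D` and `|λ| ≤ 1`. -/
def IsBalanced (D : Set E) : Prop := ∀ z ∈ D, ∀ l : ℂ, ‖l‖ ≤ 1 → l • z ∈ D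

/-- The Minkowski function of a (balanced) domain. -/
def minkowski (D : Set E) (z : E) : ℝ := sInf { t : ℝ | 0 < t ∧ (t⁻¹ : ℂ) • z ∈ D }

/-- `D` is homogeneous: its automorphism group acts transitively. -/
def IsHomogeneous (D : Set E) : Prop :=
  ∀ z ∈ D, ∀ w ∈ D, ∃ f g : E → E, DifferentiableOn ℂ f D ∧ DifferentiableOn ℂ g D ∧
    MapsTo f D D ∧ MapsTo g D D ∧ (∀ x ∈ D, g (f x) = x) ∧ (∀ x ∈ D, f (g x) = x) ∧ f z = w

/-- `D` is completely hyperbolic: the Kobayashi pseudodistance is a distance and every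
Kobayashi-Cauchy sequence in `D` converges (in the Kobayashi distance) to a point of `D`. -/
def IsCompletelyHyperbolic (D : Set E) : Prop :=
  (∀ z ∈ D, ∀ w ∈ D, kobayashi D z w = 0 → z = w) ∧
  (∀ u : ℕ → E, (∀ n, u n ∈ D) →
    (∀ ε > (0:ℝ), ∃ N, ∀ m ≥ N, ∀ n ≥ N, kobayashi D (u m) (u n) < ε) →
    ∃ x ∈ D, Filter.Tendsto (fun n => kobayashi D (u n) x) Filter.atTop (nhds 0))

/-- The punctured unit disk in `ℂ`. -/
def puncturedDisk : Set ℂ := ball 0 1 \ {0}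

end


section S1

lemma artanh_zero : artanh 0 = 0 := by simp [artanh]

lemma artanh_nonneg {x : ℝ} (h0 : 0 ≤ x) (h1 : x < 1) : 0 ≤ artanh x := by
  have h : (1:ℝ) ≤ (1 + x) / (1 - x) := by
    rw [le_div_iff₀ (by linarith)]; linarith
  have := Real.log_nonneg h
  unfold artanh; linarith

lemma artanh_le_artanh {x y : ℝ} (h0 : 0 ≤ x) (hxy : x ≤ y) (hy : y < 1) :
    artanh x ≤ artanh y := by
  have h1 : (0:ℝ) < (1 + x) / (1 - x) := div_pos (by linarith) (by linarith)
  have h2 : (1 + x) / (1 - x) ≤ (1 + y) / (1 - y) := by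
    rw [div_le_div_iff₀ (by linarith) (by linarith)]; nlinarith
  have := Real.log_le_log h1 h2
  unfold artanh; linarith

lemma artanh_lt_artanh {x y : ℝ} (h0 : 0 ≤ x) (hxy : x < y) (hy : y < 1) :
    artanh x < artanh y := by
  have h1 : (0:ℝ) < (1 + x) / (1 - x) := div_pos (by linarith) (by linarith)
  have h2 : (1 + x) / (1 - x) < (1 + y) / (1 - y) := by
    rw [div_lt_div_iff₀ (by linarith) (by linarith)]; nlinarith
  have := Real.log_lt_log h1 h2
  unfold artanh; linarith

lemma tanh_eq_exp (x : ℝ) :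
    Real.tanh x = (Real.exp (2*x) - 1) / (Real.exp (2*x) + 1) := by
  have h1 : Real.exp (2*x) = Real.exp x * Real.exp x := by
    rw [← Real.exp_add]; ring_nf
  have h2 : (0:ℝ) < Real.exp x := Real.exp_pos x
  have h3 : Real.exp (-x) = (Real.exp x)⁻¹ := Real.exp_neg x
  rw [Real.tanh_eq_sinh_div_cosh, Real.sinh_eq, Real.cosh_eq, h1, h3]
  field_simp

lemma tanh_pos {x : ℝ} (hx : 0 < x) : 0 < Real.tanh x := by
  rw [tanh_eq_exp]
  have h1 : (1:ℝ) < Real.exp (2*x) := by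
    rw [← Real.exp_zero]; exact Real.exp_lt_exp.2 (by linarith)
  have h2 : (0:ℝ) < Real.exp (2*x) + 1 := by positivity
  exact div_pos (by linarith) h2

lemma tanh_lt_one (x : ℝ) : Real.tanh x < 1 := by
  rw [tanh_eq_exp]
  have h2 : (0:ℝ) < Real.exp (2*x) + 1 := by positivity
  rw [div_lt_one h2]; linarith

lemma tanh_nonneg {x : ℝ} (hx : 0 ≤ x) : 0 ≤ Real.tanh x := by
  rcases eq_or_lt_of_le hx with h | h
  · simp [← h]
  · exact (tanh_pos h).le

lemma artanh_tanh (x : ℝ) : artanh (Real.tanh x) = x := by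
  have he : (0:ℝ) < Real.exp (2*x) := Real.exp_pos _
  rw [tanh_eq_exp]
  unfold artanh
  have h1 : 1 + (Real.exp (2*x) - 1) / (Real.exp (2*x) + 1)
      = 2 * Real.exp (2*x) / (Real.exp (2*x) + 1) := by field_simp; ring
  have h2 : 1 - (Real.exp (2*x) - 1) / (Real.exp (2*x) + 1)
      = 2 / (Real.exp (2*x) + 1) := by field_simp; ring
  have hne : Real.exp (2*x) + 1 ≠ 0 := by positivity
  have h3 : 2 * Real.exp (2*x) / (Real.exp (2*x) + 1) / (2 / (Real.exp (2*x) + 1))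
      = Real.exp (2*x) := by field_simp
  rw [h1, h2, h3, Real.log_exp]; ring

lemma two_tanh_div (R : ℝ) :
    2 * Real.tanh R / (1 - Real.tanh R ^ 2) = Real.sinh (2*R) := by
  have he : (0:ℝ) < Real.exp (2*R) := Real.exp_pos _
  have hne : Real.exp (2*R) + 1 ≠ 0 := by positivity
  have h3 : Real.exp (-(2*R)) = (Real.exp (2*R))⁻¹ := Real.exp_neg _
  rw [tanh_eq_exp]
  rw [show (1:ℝ) - ((Real.exp (2*R) - 1) / (Real.exp (2*R) + 1))^2
      = 4 * Real.exp (2*R) / (Real.exp (2*R) + 1)^2 from by field_simp; ring]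
  rw [Real.sinh_eq, h3]
  field_simp
  ring

lemma tanh_ge {R : ℝ} (h0 : 0 ≤ R) (h1 : R ≤ 1) : 2/9 * R ≤ Real.tanh R := by
  rw [tanh_eq_exp]
  have e1 : 1 + 2*R ≤ Real.exp (2*R) := by
    have := Real.add_one_le_exp (2*R); linarith
  have e2 : Real.exp (2*R) ≤ 8 := by
    calc Real.exp (2*R) ≤ Real.exp 2 := Real.exp_le_exp.2 (by linarith)
    _ = Real.exp 1 * Real.exp 1 := by rw [← Real.exp_add]; norm_num
    _ ≤ 2.7182818286 * 2.7182818286 := by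
        have := Real.exp_one_lt_d9
        nlinarith [Real.exp_pos 1]
    _ ≤ 8 := by norm_num
  rw [le_div_iff₀ (by nlinarith)]
  nlinarith

lemma sinh_le_two {y : ℝ} (h0 : 0 ≤ y) (h1 : y ≤ 1/2) : Real.sinh y ≤ 2 * y := by
  have e1 : Real.exp (-y) ≤ 1 := Real.exp_le_one_iff.2 (by linarith)
  have e2 : 1 - y ≤ Real.exp (-y) := by have := Real.add_one_le_exp (-y); linarith
  have e3 : Real.exp y ≤ 1/(1-y) := by
    rw [le_div_iff₀ (by linarith)]
    calc Real.exp y * (1 - y) ≤ Real.exp y * Real.exp (-y) := by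
          apply mul_le_mul_of_nonneg_left e2 (Real.exp_pos y).le
    _ = 1 := by rw [← Real.exp_add]; simp
  rw [Real.sinh_eq]
  have : Real.exp y - Real.exp (-y) ≤ 1/(1-y) - (1-y) := by linarith
  have h5 : 1/(1-y) - (1-y) ≤ 4*y := by
    rw [div_sub' (by linarith : (1:ℝ)-y ≠ 0), div_le_iff₀ (by linarith)]
    nlinarith
  linarith

lemma arsinh_ge_half {x : ℝ} (h0 : 0 ≤ x) (h1 : x ≤ 1) : x/2 ≤ Real.arsinh x := by
  have h2 : Real.sinh (x/2) ≤ x := by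
    have := sinh_le_two (y := x/2) (by linarith) (by linarith); linarith
  calc x/2 = Real.arsinh (Real.sinh (x/2)) := (Real.arsinh_sinh _).symm
  _ ≤ Real.arsinh x := Real.arsinh_le_arsinh.2 h2

lemma arsinh_le_self {x : ℝ} (h0 : 0 ≤ x) : Real.arsinh x ≤ x := by
  have := Real.self_le_sinh_iff.2 h0
  calc Real.arsinh x ≤ Real.arsinh (Real.sinh x) := Real.arsinh_le_arsinh.2 this
  _ = x := Real.arsinh_sinh x

lemma arsinh_pos {x : ℝ} (h0 : 0 < x) : 0 < Real.arsinh x := by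
  have : Real.arsinh 0 < Real.arsinh x := Real.arsinh_lt_arsinh.2 h0
  simpa using this

end S1
section S2

open Complex

noncomputable def pd (c d : ℂ) : ℝ := ‖(c - d) / (1 - (starRingEnd ℂ) c * d)‖

noncomputable def mb (b l : ℂ) : ℂ := (l + b) / (1 + (starRingEnd ℂ) b * l)

lemma normSq_lt_one {c : ℂ} (hc : ‖c‖ < 1) : Complex.normSq c < 1 := by
  have h := Complex.sq_norm c
  nlinarith [norm_nonneg c]

lemma one_sub_mul_ne {c d : ℂ} (hc : ‖c‖ < 1) (hd : ‖d‖ < 1) :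
    (1 : ℂ) - (starRingEnd ℂ) c * d ≠ 0 := by
  intro h
  have h2 : (starRingEnd ℂ) c * d = 1 := by linear_combination -h
  have h3 : ‖(starRingEnd ℂ) c * d‖ = 1 := by rw [h2]; simp
  rw [norm_mul, Complex.norm_conj] at h3
  nlinarith [norm_nonneg c, norm_nonneg d]

lemma one_add_mul_ne {b l : ℂ} (hb : ‖b‖ < 1) (hl : ‖l‖ < 1) :
    (1 : ℂ) + (starRingEnd ℂ) b * l ≠ 0 := by
  intro h
  have h2 : (starRingEnd ℂ) b * l = -1 := by linear_combination h
  have h3 : ‖(starRingEnd ℂ) b * l‖ = 1 := by rw [h2]; simp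
  rw [norm_mul, Complex.norm_conj] at h3
  nlinarith [norm_nonneg b, norm_nonneg l]

lemma normSq_identity (c d : ℂ) :
    Complex.normSq (1 - (starRingEnd ℂ) c * d) - Complex.normSq (c - d)
      = (1 - Complex.normSq c) * (1 - Complex.normSq d) := by
  simp only [Complex.normSq_apply, Complex.sub_re, Complex.sub_im, Complex.mul_re,
    Complex.mul_im, Complex.one_re, Complex.one_im, Complex.conj_re, Complex.conj_im]
  ring

lemma normSq_identity' (b l : ℂ) :
    Complex.normSq (1 + (starRingEnd ℂ) b * l) - Complex.normSq (l + b)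
      = (1 - Complex.normSq b) * (1 - Complex.normSq l) := by
  simp only [Complex.normSq_apply, Complex.add_re, Complex.add_im, Complex.mul_re,
    Complex.mul_im, Complex.one_re, Complex.one_im, Complex.conj_re, Complex.conj_im]
  ring

lemma abs_lt_abs_of_normSq {x y : ℂ} (h : Complex.normSq x < Complex.normSq y) :
    ‖x‖ < ‖y‖ := by
  have h1 := Complex.sq_norm x
  have h2 := Complex.sq_norm y
  nlinarith [norm_nonneg x, norm_nonneg y]

lemma pd_nonneg (c d : ℂ) : 0 ≤ pd c d := norm_nonneg _

lemma pd_lt_one {c d : ℂ} (hc : ‖c‖ < 1) (hd : ‖d‖ < 1) :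
    pd c d < 1 := by
  have hne := one_sub_mul_ne hc hd
  have hlt : Complex.normSq (c - d) < Complex.normSq (1 - (starRingEnd ℂ) c * d) := by
    have := normSq_identity c d
    nlinarith [normSq_lt_one hc, normSq_lt_one hd]
  have := abs_lt_abs_of_normSq hlt
  unfold pd
  rw [norm_div]
  exact (div_lt_one (norm_pos_iff.2 hne)).mpr this

lemma pd_symm (c d : ℂ) : pd c d = pd d c := by
  unfold pd
  rw [show (1 : ℂ) - (starRingEnd ℂ) d * c = (starRingEnd ℂ) (1 - (starRingEnd ℂ) c * d) by
    simp [map_sub, map_mul]; ring, norm_div, norm_div, Complex.norm_conj,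
    show c - d = -(d - c) by ring, norm_neg]

lemma pd_eq_abs_mb (c d : ℂ) : pd c d = ‖mb (-c) d‖ := by
  unfold pd mb
  rw [map_neg, show d + -c = -(c - d) by ring,
    show (1:ℂ) + -(starRingEnd ℂ) c * d = 1 - (starRingEnd ℂ) c * d by ring,
    norm_div, norm_div, norm_neg]

lemma mb_mem {b l : ℂ} (hb : ‖b‖ < 1) (hl : ‖l‖ < 1) :
    ‖mb b l‖ < 1 := by
  have hne := one_add_mul_ne hb hl
  have hlt : Complex.normSq (l + b) < Complex.normSq (1 + (starRingEnd ℂ) b * l) := by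
    have := normSq_identity' b l
    nlinarith [normSq_lt_one hb, normSq_lt_one hl]
  have := abs_lt_abs_of_normSq hlt
  unfold mb
  rw [norm_div, div_lt_one (norm_pos_iff.2 hne)]
  exact this

lemma mb_zero (b : ℂ) : mb b 0 = b := by simp [mb]

lemma mb_left_inv {b l : ℂ} (hb : ‖b‖ < 1) (hl : ‖l‖ < 1) :
    mb (-b) (mb b l) = l := by
  have h1 : (1:ℂ) + (starRingEnd ℂ) b * l ≠ 0 := one_add_mul_ne hb hl
  have h2 : (1:ℂ) - (starRingEnd ℂ) b * b ≠ 0 := one_sub_mul_ne hb hb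
  have hnum : (l + b)/(1 + (starRingEnd ℂ) b * l) + -b
      = l * (1 - (starRingEnd ℂ) b * b)/(1 + (starRingEnd ℂ) b * l) := by
    rw [eq_div_iff h1, add_mul, div_mul_cancel₀ _ h1]
    ring
  have hden : 1 + (starRingEnd ℂ) (-b) * ((l + b)/(1 + (starRingEnd ℂ) b * l))
      = (1 - (starRingEnd ℂ) b * b)/(1 + (starRingEnd ℂ) b * l) := by
    rw [map_neg]
    field_simp
    ring
  have haux : ∀ (a c D : ℂ), D ≠ 0 → c ≠ 0 → (a * c / D) / (c / D) = a := by
    intro a c D hD hc; field_simp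
  show ((l + b)/(1 + (starRingEnd ℂ) b * l) + -b)
      / (1 + (starRingEnd ℂ) (-b) * ((l + b)/(1 + (starRingEnd ℂ) b * l))) = l
  rw [hnum, hden]
  exact haux l _ _ h1 h2

lemma mb_right_inv {b l : ℂ} (hb : ‖b‖ < 1) (hl : ‖l‖ < 1) :
    mb b (mb (-b) l) = l := by
  have := mb_left_inv (b := -b) (l := l) (by rwa [norm_neg]) hl
  rwa [neg_neg] at this

lemma pd_self (c : ℂ) : pd c c = 0 := by unfold pd; simp

lemma mb_diff {b : ℂ} (hb : ‖b‖ < 1) :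
    DifferentiableOn ℂ (fun l => mb b l) (Metric.ball 0 1) := by
  unfold mb
  apply DifferentiableOn.div
  · exact (differentiable_id.add_const b).differentiableOn
  · exact (((differentiable_const _).mul differentiable_id).const_add 1).differentiableOn
  · intro l hl
    rw [mem_ball_zero_iff] at hl
    exact one_add_mul_ne hb hl

lemma mb_mapsTo {b : ℂ} (hb : ‖b‖ < 1) :
    Set.MapsTo (fun l => mb b l) (Metric.ball 0 1) (Metric.ball 0 1) := by
  intro l hl
  rw [mem_ball_zero_iff] at hl ⊢
  exact mb_mem hb hl

lemma schwarz_pick {f : ℂ → ℂ} (hf : DifferentiableOn ℂ f (Metric.ball 0 1))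
    (hm : Set.MapsTo f (Metric.ball 0 1) (Metric.ball 0 1)) {x y : ℂ}
    (hx : x ∈ Metric.ball (0:ℂ) 1) (hy : y ∈ Metric.ball (0:ℂ) 1) :
    pd (f x) (f y) ≤ pd x y := by
  rw [mem_ball_zero_iff] at hx hy
  have hfx : ‖f x‖ < 1 := by
    have := hm (mem_ball_zero_iff.2 hx); rwa [mem_ball_zero_iff] at this
  have hfmem : ∀ l ∈ Metric.ball (0:ℂ) 1, ‖f (mb x l)‖ < 1 := by
    intro l hl
    have := hm (mb_mapsTo hx hl); rwa [mem_ball_zero_iff] at this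
  have hfc : DifferentiableOn ℂ (fun l => f (mb x l)) (Metric.ball 0 1) :=
    hf.comp (mb_diff hx) (mb_mapsTo hx)
  have hgd : DifferentiableOn ℂ (fun l => (f (mb x l) - f x) / (1 - (starRingEnd ℂ) (f x) * f (mb x l))) (Metric.ball 0 1) := by
    apply DifferentiableOn.div
    · exact hfc.sub_const (f x)
    · exact (((differentiableOn_const _).mul hfc).const_sub 1)
    · intro l hl
      exact one_sub_mul_ne hfx (hfmem l hl)
  have hgm : Set.MapsTo (fun l => (f (mb x l) - f x) / (1 - (starRingEnd ℂ) (f x) * f (mb x l)))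
      (Metric.ball 0 1) (Metric.ball 0 1) := by
    intro l hl
    rw [mem_ball_zero_iff]
    have h1 : ‖mb (-(f x)) (f (mb x l))‖ < 1 :=
      mb_mem (by rwa [norm_neg]) (hfmem l hl)
    have h2 : mb (-(f x)) (f (mb x l))
        = (f (mb x l) - f x) / (1 - (starRingEnd ℂ) (f x) * f (mb x l)) := by
      unfold mb
      rw [map_neg]
      congr 1 <;> ring
    rwa [h2] at h1
  have hg0 : (fun l => (f (mb x l) - f x) / (1 - (starRingEnd ℂ) (f x) * f (mb x l))) 0 = 0 := by
    simp only [mb_zero, sub_self, zero_div]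
  have hwmem : ‖mb (-x) y‖ < 1 := mb_mem (by rwa [norm_neg]) hy
  have hsch := Complex.norm_le_norm_of_mapsTo_ball_self hgd (hgm.mono_right ball_subset_closedBall) hg0 (z := mb (-x) y) hwmem
  simp only [mb_right_inv hx hy] at hsch
  rw [pd_eq_abs_mb, pd_eq_abs_mb]
  have h2 : mb (-(f x)) (f y) = (f y - f x) / (1 - (starRingEnd ℂ) (f x) * f y) := by
    unfold mb
    rw [map_neg]
    congr 1 <;> ring
  have h3 : mb (-x) y = (y - x) / (1 - (starRingEnd ℂ) x * y) := by
    unfold mb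
    rw [map_neg]
    congr 1 <;> ring
  rw [h2, h3]
  rw [h3] at hsch
  exact hsch

lemma pd_mb_invariant {b x y : ℂ} (hb : ‖b‖ < 1) (hx : ‖x‖ < 1)
    (hy : ‖y‖ < 1) : pd (mb b x) (mb b y) = pd x y := by
  have hxm : x ∈ Metric.ball (0:ℂ) 1 := mem_ball_zero_iff.2 hx
  have hym : y ∈ Metric.ball (0:ℂ) 1 := mem_ball_zero_iff.2 hy
  have hnb : ‖-b‖ < 1 := by rwa [norm_neg]
  apply le_antisymm
  · exact schwarz_pick (mb_diff hb) (mb_mapsTo hb) hxm hym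
  · have h := schwarz_pick (mb_diff hnb) (mb_mapsTo hnb)
      (mem_ball_zero_iff.2 (mb_mem hb hx)) (mem_ball_zero_iff.2 (mb_mem hb hy))
    simp only [mb_left_inv hb hx, mb_left_inv hb hy] at h
    exact h

lemma pd_le_sum {X W : ℂ} (hX : ‖X‖ < 1) (hW : ‖W‖ < 1) :
    pd X W ≤ (‖X‖ + ‖W‖) / (1 + ‖X‖ * ‖W‖) := by
  set A := ‖X‖ with hA
  set B := ‖W‖ with hB
  have hA0 : 0 ≤ A := norm_nonneg X
  have hB0 : 0 ≤ B := norm_nonneg W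
  set p : ℝ := (X * (starRingEnd ℂ) W).re with hp
  have hple : |p| ≤ A * B := by
    calc |p| ≤ ‖X * (starRingEnd ℂ) W‖ := Complex.abs_re_le_norm _
    _ = A * B := by rw [norm_mul, Complex.norm_conj]
  have hA2 : A^2 = Complex.normSq X := Complex.sq_norm X
  have hB2 : B^2 = Complex.normSq W := Complex.sq_norm W
  have hn1 : Complex.normSq (X - W) = A^2 + B^2 - 2*p := by
    rw [hA2, hB2]
    simp only [hp, Complex.normSq_apply, Complex.sub_re, Complex.sub_im, Complex.mul_re,
      Complex.mul_im, Complex.conj_re, Complex.conj_im]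
    ring
  have hn2 : Complex.normSq (1 - (starRingEnd ℂ) X * W) = 1 + A^2 * B^2 - 2*p := by
    rw [hA2, hB2]
    simp only [hp, Complex.normSq_apply, Complex.sub_re, Complex.sub_im, Complex.mul_re,
      Complex.mul_im, Complex.conj_re, Complex.conj_im, Complex.one_re, Complex.one_im]
    ring
  have hne := one_sub_mul_ne hX hW
  have hpos : 0 < ‖1 - (starRingEnd ℂ) X * W‖ := norm_pos_iff.2 hne
  unfold pd
  rw [norm_div, div_le_div_iff₀ hpos (by positivity)]
  have hsq : (‖X - W‖ * (1 + A * B))^2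
      ≤ ((A + B) * ‖1 - (starRingEnd ℂ) X * W‖)^2 := by
    rw [mul_pow, mul_pow, Complex.sq_norm, Complex.sq_norm, hn1, hn2]
    nlinarith [mul_nonneg (mul_nonneg (by linarith [abs_le.mp hple] : (0:ℝ) ≤ p + A*B)
      (by nlinarith : (0:ℝ) ≤ 1 - A^2)) (by nlinarith : (0:ℝ) ≤ 1 - B^2)]
  have h1 : 0 ≤ ‖X - W‖ * (1 + A * B) := by positivity
  have h2 : 0 ≤ (A + B) * ‖1 - (starRingEnd ℂ) X * W‖ := by positivity
  nlinarith [hsq]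

lemma artanh_add {A B : ℝ} (hA0 : 0 ≤ A) (hA : A < 1) (hB0 : 0 ≤ B) (hB : B < 1) :
    artanh ((A + B) / (1 + A * B)) = artanh A + artanh B := by
  have hd : (0:ℝ) < 1 + A * B := by nlinarith
  unfold artanh
  have h1 : 1 + (A + B) / (1 + A * B) = (1+A)*(1+B)/(1+A*B) := by field_simp; ring
  have h2 : 1 - (A + B) / (1 + A * B) = (1-A)*(1-B)/(1+A*B) := by field_simp; ring
  rw [h1, h2]
  have h3 : (1+A)*(1+B)/(1+A*B) / ((1-A)*(1-B)/(1+A*B))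
      = ((1+A)/(1-A)) * ((1+B)/(1-B)) := by
    field_simp
  rw [h3, Real.log_mul (ne_of_gt (div_pos (by linarith) (by linarith)))
    (ne_of_gt (div_pos (by linarith) (by linarith)))]
  ring

lemma sum_lt_one {A B : ℝ} (hA0 : 0 ≤ A) (hA : A < 1) (hB0 : 0 ≤ B) (hB : B < 1) :
    (A + B) / (1 + A * B) < 1 := by
  rw [div_lt_one (by nlinarith)]
  nlinarith

lemma poincare_triangle {x y w : ℂ} (hx : ‖x‖ < 1) (hy : ‖y‖ < 1)
    (hw : ‖w‖ < 1) :
    artanh (pd x w) ≤ artanh (pd x y) + artanh (pd y w) := by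
  set x' := mb (-y) x with hx'def
  set w' := mb (-y) w with hw'def
  have hny : ‖-y‖ < 1 := by rwa [norm_neg]
  have hx' : ‖x'‖ < 1 := mb_mem hny hx
  have hw' : ‖w'‖ < 1 := mb_mem hny hw
  have hinv : pd x w = pd x' w' := by
    have := pd_mb_invariant (b := y) hy hx' hw'
    rw [show mb y x' = x from mb_right_inv hy hx, show mb y w' = w from mb_right_inv hy hw] at this
    exact this
  have heq1 : pd x y = ‖x'‖ := by rw [pd_symm, pd_eq_abs_mb]
  have heq2 : pd y w = ‖w'‖ := by rw [pd_eq_abs_mb]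
  have hA0 : 0 ≤ ‖x'‖ := norm_nonneg _
  have hB0 : 0 ≤ ‖w'‖ := norm_nonneg _
  rw [hinv, heq1, heq2]
  calc artanh (pd x' w')
      ≤ artanh ((‖x'‖ + ‖w'‖) / (1 + ‖x'‖ * ‖w'‖)) := by
        apply artanh_le_artanh (pd_nonneg _ _) (pd_le_sum hx' hw')
        exact sum_lt_one hA0 hx' hB0 hw'
  _ = artanh (‖x'‖) + artanh (‖w'‖) := artanh_add hA0 hx' hB0 hw'

end S2
section S3

open Complex MeasureTheory intervalIntegral

lemma sq_mem_ball {u : ℂ} (h : u.re^2 + u.im^2 < 1) : u ∈ Metric.ball (0:ℂ) 1 := by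
  rw [mem_ball_zero_iff]
  have h2 : ‖u‖ ^ 2 = u.re^2 + u.im^2 := by
    rw [Complex.sq_norm, Complex.normSq_apply]; ring
  show ‖u‖ < 1
  nlinarith [norm_nonneg u]

lemma abs_le_max_of_uIcc {a b x : ℝ} (hx : x ∈ Set.uIcc a b) : |x| ≤ max |a| |b| := by
  rw [Set.uIcc_eq_union] at hx
  rcases hx with hx | hx <;> rw [Set.mem_Icc] at hx
  · exact abs_le.2 ⟨by linarith [neg_abs_le a, le_max_left |a| |b|],
      by linarith [le_abs_self b, le_max_right |a| |b|]⟩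
  · exact abs_le.2 ⟨by linarith [neg_abs_le b, le_max_right |a| |b|],
      by linarith [le_abs_self a, le_max_left |a| |b|]⟩

lemma abs_sub_le_of_uIcc {a b x : ℝ} (hx : x ∈ Set.uIcc a b) : |x - a| ≤ |b - a| := by
  rw [Set.uIcc_eq_union] at hx
  rcases hx with hx | hx <;> rw [Set.mem_Icc] at hx <;> rw [abs_le] <;> constructor
  · linarith [abs_nonneg (b-a), hx.1]
  · linarith [le_abs_self (b-a), hx.2]
  · linarith [neg_abs_le (b-a), hx.1]
  · linarith [abs_nonneg (b-a), hx.2]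

lemma exists_primitive {g : ℂ → ℂ} (hg : DifferentiableOn ℂ g (Metric.ball 0 1)) :
    ∃ G : ℂ → ℂ, ∀ z ∈ Metric.ball (0:ℂ) 1, HasDerivAt G (g z) z := by
  have hgc : ContinuousOn g (Metric.ball 0 1) := hg.continuousOn
  set Gfun : ℂ → ℂ := fun z => (∫ x : ℝ in (0:ℝ)..z.re, g x) +
    Complex.I * ∫ y : ℝ in (0:ℝ)..z.im, g (z.re + y * Complex.I) with hGdef
  refine ⟨Gfun, ?_⟩
  intro z₀ hz₀
  have habs : ‖z₀‖ < 1 := mem_ball_zero_iff.mp hz₀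
  have hns : Complex.normSq z₀ < 1 := normSq_lt_one habs
  have hns0 : 0 ≤ Complex.normSq z₀ := Complex.normSq_nonneg z₀
  set ρ : ℝ := (1 - Complex.normSq z₀)/8 with hρdef
  have hρ : 0 < ρ := by rw [hρdef]; linarith
  have hρ8 : ρ ≤ 1/8 := by rw [hρdef]; linarith
  have hnseq : z₀.re^2 + z₀.im^2 = Complex.normSq z₀ := by
    rw [Complex.normSq_apply]; ring
  have hre1 : |z₀.re| ≤ 1 := by nlinarith [_root_.sq_abs z₀.re, abs_nonneg z₀.re]
  have him1 : |z₀.im| ≤ 1 := by nlinarith [_root_.sq_abs z₀.im, abs_nonneg z₀.im]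
  have hrez : |z₀.re| ≤ |z₀.re| + ρ := by linarith
  have himz : |z₀.im| ≤ |z₀.im| + ρ := by linarith
  have h0re : |(0:ℝ)| ≤ |z₀.re| + ρ := by simp; positivity
  have h0im : |(0:ℝ)| ≤ |z₀.im| + ρ := by simp; positivity
  have hmem : ∀ u : ℂ, |u.re| ≤ |z₀.re| + ρ → |u.im| ≤ |z₀.im| + ρ →
      u ∈ Metric.ball (0:ℂ) 1 := by
    intro u h1 h2
    apply sq_mem_ball
    have e1 : u.re^2 ≤ (|z₀.re| + ρ)^2 := by
      rw [← _root_.sq_abs u.re]; exact pow_le_pow_left₀ (abs_nonneg _) h1 2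
    have e2 : u.im^2 ≤ (|z₀.im| + ρ)^2 := by
      rw [← _root_.sq_abs u.im]; exact pow_le_pow_left₀ (abs_nonneg _) h2 2
    have e3 : (|z₀.re| + ρ)^2 = z₀.re^2 + 2*ρ*|z₀.re| + ρ^2 := by
      rw [← _root_.sq_abs z₀.re]; ring
    have e4 : (|z₀.im| + ρ)^2 = z₀.im^2 + 2*ρ*|z₀.im| + ρ^2 := by
      rw [← _root_.sq_abs z₀.im]; ring
    nlinarith
  have hmemz : ∀ x y : ℝ, |x| ≤ |z₀.re| + ρ → |y| ≤ |z₀.im| + ρ →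
      ((x:ℂ) + (y:ℂ) * Complex.I) ∈ Metric.ball (0:ℂ) 1 := by
    intro x y hx hy
    apply hmem <;> simpa using (by assumption : _)
  -- integrability lemmas
  have hIntH : ∀ (cIm x1 x2 : ℝ), |cIm| ≤ |z₀.im| + ρ → |x1| ≤ |z₀.re| + ρ →
      |x2| ≤ |z₀.re| + ρ →
      IntervalIntegrable (fun x : ℝ => g ((x:ℂ) + (cIm:ℂ) * Complex.I)) volume x1 x2 := by
    intro cIm x1 x2 hc h1 h2
    apply ContinuousOn.intervalIntegrable
    apply hgc.comp (Continuous.continuousOn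
      (Complex.continuous_ofReal.add continuous_const))
    intro x hx
    exact hmemz x cIm (le_trans (abs_le_max_of_uIcc hx) (max_le h1 h2)) hc
  have hIntV : ∀ (cRe y1 y2 : ℝ), |cRe| ≤ |z₀.re| + ρ → |y1| ≤ |z₀.im| + ρ →
      |y2| ≤ |z₀.im| + ρ →
      IntervalIntegrable (fun y : ℝ => g ((cRe:ℂ) + (y:ℂ) * Complex.I)) volume y1 y2 := by
    intro cRe y1 y2 hc h1 h2
    apply ContinuousOn.intervalIntegrable
    apply hgc.comp (Continuous.continuousOn
      (continuous_const.add (Complex.continuous_ofReal.mul continuous_const)))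
    intro y hy
    exact hmemz cRe y hc (le_trans (abs_le_max_of_uIcc hy) (max_le h1 h2))
  have hIntH0 : ∀ (x1 x2 : ℝ), |x1| ≤ |z₀.re| + ρ → |x2| ≤ |z₀.re| + ρ →
      IntervalIntegrable (fun x : ℝ => g (x:ℂ)) volume x1 x2 := by
    intro x1 x2 h1 h2
    apply ContinuousOn.intervalIntegrable
    apply hgc.comp (Continuous.continuousOn Complex.continuous_ofReal)
    intro x hx
    have := hmemz x 0 (le_trans (abs_le_max_of_uIcc hx) (max_le h1 h2)) h0im
    simpa using this
  rw [hasDerivAt_iff_isLittleO, Asymptotics.isLittleO_iff]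
  intro c hc
  have hgC : ContinuousAt g z₀ :=
    (hg.differentiableAt (Metric.isOpen_ball.mem_nhds hz₀)).continuousAt
  obtain ⟨δ, hδ, hδball⟩ := Metric.continuousAt_iff.mp hgC (c/2) (half_pos hc)
  have hρδ : 0 < min ρ (δ/2) := lt_min hρ (half_pos hδ)
  rw [Filter.eventually_iff_exists_mem]
  refine ⟨Metric.ball z₀ (min ρ (δ/2)), Metric.ball_mem_nhds z₀ hρδ, ?_⟩
  intro w hw
  rw [Metric.mem_ball] at hw
  have hwρ : dist w z₀ < ρ := lt_of_lt_of_le hw (min_le_left _ _)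
  have hwδ : dist w z₀ < δ/2 := lt_of_lt_of_le hw (min_le_right _ _)
  have hdre : |w.re - z₀.re| ≤ dist w z₀ := by
    rw [Complex.dist_eq]
    have h := Complex.abs_re_le_norm (w - z₀)
    simpa using h
  have hdim : |w.im - z₀.im| ≤ dist w z₀ := by
    rw [Complex.dist_eq]
    have h := Complex.abs_im_le_norm (w - z₀)
    simpa using h
  have hwre : |w.re| ≤ |z₀.re| + ρ := by
    have := abs_sub_abs_le_abs_sub w.re z₀.re
    linarith [hdre.trans hwρ.le]
  have hwim : |w.im| ≤ |z₀.im| + ρ := by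
    have := abs_sub_abs_le_abs_sub w.im z₀.im
    linarith [hdim.trans hwρ.le]
  -- rectangle
  set p : ℂ := (z₀.re : ℂ) with hp
  set q : ℂ := (w.re : ℂ) + (z₀.im : ℂ) * Complex.I with hq
  have hpre : p.re = z₀.re := by simp [hp]
  have hpim : p.im = 0 := by simp [hp]
  have hqre : q.re = w.re := by simp [hq]
  have hqim : q.im = z₀.im := by simp [hq]
  have hsubset : Set.uIcc p.re q.re ×ℂ Set.uIcc p.im q.im ⊆ Metric.ball (0:ℂ) 1 := by
    intro u hu
    rw [Complex.mem_reProdIm] at hu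
    obtain ⟨h1, h2⟩ := hu
    rw [hpre, hqre] at h1; rw [hpim, hqim] at h2
    apply hmem
    · exact le_trans (abs_le_max_of_uIcc h1) (max_le hrez hwre)
    · exact le_trans (abs_le_max_of_uIcc h2) (max_le h0im himz)
  have hrect := Complex.integral_boundary_rect_eq_zero_of_differentiableOn g p q
    (hg.mono hsubset)
  rw [hpre, hpim, hqre, hqim] at hrect
  simp only [Complex.ofReal_zero, zero_mul, add_zero, smul_eq_mul] at hrect
  -- splits
  have hsplit1 := intervalIntegral.integral_add_adjacent_intervals
    (hIntH0 0 z₀.re h0re hrez) (hIntH0 z₀.re w.re hrez hwre)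
  have hsplit2 := intervalIntegral.integral_add_adjacent_intervals
    (hIntV w.re 0 z₀.im hwre h0im himz) (hIntV w.re z₀.im w.im hwre himz hwim)
  have hcomb : Gfun w - Gfun z₀ - (w - z₀) • g z₀
      = (∫ x : ℝ in z₀.re..w.re, (g ((x:ℂ) + (z₀.im:ℂ)*Complex.I) - g z₀))
        + Complex.I * (∫ y : ℝ in z₀.im..w.im, (g ((w.re:ℂ) + (y:ℂ)*Complex.I) - g z₀)) := by
    rw [hGdef]
    simp only []
    rw [intervalIntegral.integral_sub (hIntH z₀.im z₀.re w.re himz hrez hwre)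
        intervalIntegrable_const,
      intervalIntegral.integral_sub (hIntV w.re z₀.im w.im hwre himz hwim)
        intervalIntegrable_const,
      intervalIntegral.integral_const, intervalIntegral.integral_const]
    have hwz : w - z₀ = ((w.re - z₀.re : ℝ) : ℂ) + ((w.im - z₀.im : ℝ) : ℂ) * Complex.I := by
      simp [Complex.ext_iff]
    simp only [smul_eq_mul, Complex.real_smul]
    rw [hwz]
    push_cast
    linear_combination (-1 : ℂ)*hsplit1 - Complex.I*hsplit2 + hrect
  rw [hcomb]
  have hb1 : ‖∫ x : ℝ in z₀.re..w.re, (g ((x:ℂ) + (z₀.im:ℂ)*Complex.I) - g z₀)‖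
      ≤ (c/2) * |w.re - z₀.re| := by
    apply intervalIntegral.norm_integral_le_of_norm_le_const
    intro x hx
    have hx' : x ∈ Set.uIcc z₀.re w.re := Set.uIoc_subset_uIcc hx
    have hxd : |x - z₀.re| ≤ |w.re - z₀.re| := abs_sub_le_of_uIcc hx'
    have hdist : dist ((x:ℂ) + (z₀.im:ℂ)*Complex.I) z₀ < δ := by
      rw [Complex.dist_eq]
      have : (x:ℂ) + (z₀.im:ℂ)*Complex.I - z₀ = ((x - z₀.re : ℝ) : ℂ) := by
        simp [Complex.ext_iff]
      rw [this, Complex.norm_real, Real.norm_eq_abs]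
      calc |x - z₀.re| ≤ |w.re - z₀.re| := hxd
      _ ≤ dist w z₀ := hdre
      _ < δ := by linarith
    have := hδball hdist
    rw [dist_eq_norm] at this
    exact this.le
  have hb2 : ‖∫ y : ℝ in z₀.im..w.im, (g ((w.re:ℂ) + (y:ℂ)*Complex.I) - g z₀)‖
      ≤ (c/2) * |w.im - z₀.im| := by
    apply intervalIntegral.norm_integral_le_of_norm_le_const
    intro y hy
    have hy' : y ∈ Set.uIcc z₀.im w.im := Set.uIoc_subset_uIcc hy
    have hyd : |y - z₀.im| ≤ |w.im - z₀.im| := abs_sub_le_of_uIcc hy'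
    have hdist : dist ((w.re:ℂ) + (y:ℂ)*Complex.I) z₀ < δ := by
      rw [Complex.dist_eq]
      calc ‖(w.re:ℂ) + (y:ℂ)*Complex.I - z₀‖
          ≤ |((w.re:ℂ) + (y:ℂ)*Complex.I - z₀).re| + |((w.re:ℂ) + (y:ℂ)*Complex.I - z₀).im| :=
            Complex.norm_le_abs_re_add_abs_im _
      _ = |w.re - z₀.re| + |y - z₀.im| := by simp
      _ ≤ dist w z₀ + |w.im - z₀.im| := by linarith
      _ ≤ dist w z₀ + dist w z₀ := by linarith
      _ < δ := by linarith
    have := hδball hdist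
    rw [dist_eq_norm] at this
    exact this.le
  calc ‖(∫ x : ℝ in z₀.re..w.re, (g ((x:ℂ) + (z₀.im:ℂ)*Complex.I) - g z₀))
        + Complex.I * (∫ y : ℝ in z₀.im..w.im, (g ((w.re:ℂ) + (y:ℂ)*Complex.I) - g z₀))‖
      ≤ ‖∫ x : ℝ in z₀.re..w.re, (g ((x:ℂ) + (z₀.im:ℂ)*Complex.I) - g z₀)‖
        + ‖Complex.I * (∫ y : ℝ in z₀.im..w.im, (g ((w.re:ℂ) + (y:ℂ)*Complex.I) - g z₀))‖ :=
        norm_add_le _ _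
  _ = ‖∫ x : ℝ in z₀.re..w.re, (g ((x:ℂ) + (z₀.im:ℂ)*Complex.I) - g z₀)‖
        + ‖∫ y : ℝ in z₀.im..w.im, (g ((w.re:ℂ) + (y:ℂ)*Complex.I) - g z₀)‖ := by
        rw [norm_mul, Complex.norm_I, one_mul]
  _ ≤ (c/2) * |w.re - z₀.re| + (c/2) * |w.im - z₀.im| := by linarith
  _ ≤ (c/2) * ‖w - z₀‖ + (c/2) * ‖w - z₀‖ := by
      have h1 : |w.re - z₀.re| ≤ ‖w - z₀‖ := hdre.trans (le_of_eq (dist_eq_norm w z₀))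
      have h2 : |w.im - z₀.im| ≤ ‖w - z₀‖ := hdim.trans (le_of_eq (dist_eq_norm w z₀))
      have := half_pos hc
      nlinarith
  _ = c * ‖w - z₀‖ := by ring

lemma exists_log {φ : ℂ → ℂ} (hφ : DifferentiableOn ℂ φ (Metric.ball 0 1))
    (hnz : ∀ l ∈ Metric.ball (0:ℂ) 1, φ l ≠ 0) :
    ∃ h : ℂ → ℂ, DifferentiableOn ℂ h (Metric.ball 0 1) ∧
      ∀ l ∈ Metric.ball (0:ℂ) 1, Complex.exp (h l) = φ l := by
  have hφa : AnalyticOnNhd ℂ φ (Metric.ball 0 1) := hφ.analyticOnNhd Metric.isOpen_ball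
  have hder : DifferentiableOn ℂ (deriv φ) (Metric.ball 0 1) :=
    (hφa.deriv).differentiableOn
  have hgdiff : DifferentiableOn ℂ (fun l => deriv φ l / φ l) (Metric.ball 0 1) :=
    hder.div hφ hnz
  obtain ⟨G, hG⟩ := exists_primitive hgdiff
  refine ⟨fun l => Complex.log (φ 0) + G l - G 0, ?_, ?_⟩
  · intro l hl
    apply DifferentiableAt.differentiableWithinAt
    exact (((hG l hl).differentiableAt.const_add _).sub_const _)
  · -- F := φ * exp(-h) is constant
    have h0mem : (0:ℂ) ∈ Metric.ball (0:ℂ) 1 := by simp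
    set h : ℂ → ℂ := fun l => Complex.log (φ 0) + G l - G 0 with hhdef
    set F : ℂ → ℂ := fun l => φ l * Complex.exp (-h l) with hFdef
    have hFder : ∀ l ∈ Metric.ball (0:ℂ) 1, HasDerivAt F 0 l := by
      intro l hl
      have hφd : HasDerivAt φ (deriv φ l) l :=
        (hφ.differentiableAt (Metric.isOpen_ball.mem_nhds hl)).hasDerivAt
      have hhd : HasDerivAt h (deriv φ l / φ l) l := by
        rw [hhdef]
        exact ((hG l hl).const_add _).sub_const _
      have hed : HasDerivAt (fun x => Complex.exp (-h x))
          (-(deriv φ l / φ l) * Complex.exp (-h l)) l := by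
        have := (hhd.neg).cexp
        exact this.congr_deriv (by rw [Pi.neg_apply]; ring)
      have hφl : φ l ≠ 0 := hnz l hl
      have hc : φ l * (deriv φ l / φ l) = deriv φ l := by field_simp
      exact (hφd.mul hed).congr_deriv (by linear_combination (-(Complex.exp (-h l))) * hc)
    have hFdiff : DifferentiableOn ℂ F (Metric.ball 0 1) := fun l hl =>
      ((hFder l hl).differentiableAt).differentiableWithinAt
    have hFconst : ∀ l ∈ Metric.ball (0:ℂ) 1, F l = F 0 := by
      intro l hl
      apply Convex.is_const_of_fderivWithin_eq_zero (convex_ball 0 1) hFdiff _ hl h0mem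
      intro x hx
      rw [fderivWithin_of_isOpen Metric.isOpen_ball hx]
      have : HasFDerivAt F ((ContinuousLinearMap.id ℂ ℂ).smulRight (0:ℂ)) x :=
        (hFder x hx).hasFDerivAt
      rw [this.fderiv]
      ext v
      simp
    have hF0 : F 0 = 1 := by
      rw [hFdef]
      simp only []
      have hh0 : h 0 = Complex.log (φ 0) := by rw [hhdef]; ring
      rw [hh0, Complex.exp_neg, Complex.exp_log (hnz 0 h0mem)]
      exact mul_inv_cancel₀ (hnz 0 h0mem)
    intro l hl
    have hFl : φ l * Complex.exp (-h l) = 1 := by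
      have h1 := hFconst l hl
      rw [hF0] at h1
      rw [hFdef] at h1
      exact h1
    have hexp : Complex.exp (-h l) * Complex.exp (h l) = 1 := by
      rw [← Complex.exp_add]; simp
    calc Complex.exp (h l) = (φ l * Complex.exp (-h l)) * Complex.exp (h l) := by
          rw [hFl, one_mul]
    _ = φ l * (Complex.exp (-h l) * Complex.exp (h l)) := by ring
    _ = φ l := by rw [hexp, mul_one]

end S3
section S4

noncomputable def dLHP (u v : ℂ) : ℝ :=
  artanh (‖(u - v)/((starRingEnd ℂ) u + v)‖)

noncomputable def cay (u : ℂ) : ℂ := (1 + u)/(1 - u)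

noncomputable def cayInv (m : ℂ) : ℂ := (m - 1)/(m + 1)

lemma ne_zero_of_re_neg {z : ℂ} (h : z.re < 0) : z ≠ 0 := by
  intro hz; rw [hz] at h; simp at h

lemma one_sub_ne_of_re_neg {u : ℂ} (hu : u.re < 0) : (1:ℂ) - u ≠ 0 := by
  intro h
  have := congrArg Complex.re h
  simp at this
  linarith

lemma conj_add_ne {u v : ℂ} (hu : u.re < 0) (hv : v.re < 0) :
    (starRingEnd ℂ) u + v ≠ 0 := by
  apply ne_zero_of_re_neg
  simp only [Complex.add_re, Complex.conj_re]
  linarith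

lemma meml_ne_neg_one {m : ℂ} (hm : ‖m‖ < 1) : m + 1 ≠ 0 := by
  intro h
  have h2 : m = -1 := by linear_combination h
  rw [h2] at hm
  simp at hm

lemma cay_mem {u : ℂ} (hu : u.re < 0) : ‖cay u‖ < 1 := by
  have hne := one_sub_ne_of_re_neg hu
  have hlt : Complex.normSq (1 + u) < Complex.normSq (1 - u) := by
    simp only [Complex.normSq_apply, Complex.add_re, Complex.add_im, Complex.sub_re,
      Complex.sub_im, Complex.one_re, Complex.one_im]
    nlinarith
  have := abs_lt_abs_of_normSq hlt
  unfold cay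
  rw [norm_div]
  exact (div_lt_one (norm_pos_iff.2 hne)).mpr this

lemma div_div_cancel_helper (a c D : ℂ) (hD : D ≠ 0) (hc : c ≠ 0) :
    (a * c / D) / (c / D) = a := by field_simp

lemma cayInv_cay {u : ℂ} (hu : u.re < 0) : cayInv (cay u) = u := by
  have h1 := one_sub_ne_of_re_neg hu
  have h2 : cay u + 1 = 2/(1 - u) := by unfold cay; field_simp; ring
  have h3 : cay u - 1 = u * 2/(1 - u) := by unfold cay; field_simp; ring
  unfold cayInv
  rw [h2, h3]
  exact div_div_cancel_helper u 2 (1-u) h1 two_ne_zero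

lemma cay_cayInv {m : ℂ} (hm : ‖m‖ < 1) : cay (cayInv m) = m := by
  have h1 := meml_ne_neg_one hm
  have h2 : (1:ℂ) - cayInv m = 2/(m + 1) := by unfold cayInv; field_simp; ring
  have h3 : (1:ℂ) + cayInv m = m * 2/(m + 1) := by unfold cayInv; field_simp; ring
  unfold cay
  rw [h2, h3]
  exact div_div_cancel_helper m 2 (m+1) h1 two_ne_zero

lemma cayInv_re {m : ℂ} (hm : ‖m‖ < 1) : (cayInv m).re < 0 := by
  have h1 := meml_ne_neg_one hm
  have h2 : 0 < Complex.normSq (m + 1) := Complex.normSq_pos.mpr h1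
  unfold cayInv
  rw [Complex.div_re]
  have e1 : (m - 1).re * (m + 1).re / Complex.normSq (m + 1)
      + (m - 1).im * (m + 1).im / Complex.normSq (m + 1)
      = (Complex.normSq m - 1) / Complex.normSq (m + 1) := by
    rw [← add_div]
    congr 1
    simp only [Complex.sub_re, Complex.sub_im, Complex.add_re, Complex.add_im,
      Complex.one_re, Complex.one_im, Complex.normSq_apply]
    ring
  rw [e1]
  apply div_neg_of_neg_of_pos _ h2
  have := normSq_lt_one hm
  linarith

lemma pd_cay {u v : ℂ} (hu : u.re < 0) (hv : v.re < 0) :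
    pd (cay u) (cay v) = ‖(u - v)/((starRingEnd ℂ) u + v)‖ := by
  have h1 := one_sub_ne_of_re_neg hu
  have h2 := one_sub_ne_of_re_neg hv
  have h3 := conj_add_ne hu hv
  have h4 : (starRingEnd ℂ) ((1:ℂ) - u) ≠ 0 := by
    intro h; apply h1
    have := congrArg (starRingEnd ℂ) h
    simpa using this
  have h4' : (1:ℂ) - (starRingEnd ℂ) u ≠ 0 := by
    intro h
    have := congrArg Complex.re h
    simp [Complex.conj_re] at this
    linarith
  have hcu := cay_mem hu
  have hcv := cay_mem hv
  have h6 : (1:ℂ) - (starRingEnd ℂ) (cay u) * cay v ≠ 0 := one_sub_mul_ne hcu hcv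
  have key : (cay u - cay v) / (1 - (starRingEnd ℂ) (cay u) * cay v)
      = -((u - v)/((starRingEnd ℂ) u + v))
        * ((starRingEnd ℂ) (1 - u)/(1 - u)) := by
    rw [div_eq_iff h6]
    unfold cay
    simp only [map_div₀, map_add, map_sub, map_one, Complex.conj_conj]
    field_simp
    ring
  unfold pd
  rw [key, norm_mul, norm_neg, norm_div ((starRingEnd ℂ) (1-u)) (1-u),
    Complex.norm_conj, div_self (by exact norm_ne_zero_iff.2 h1), mul_one]

lemma dLHP_translate (u v : ℂ) (t : ℝ) :
    dLHP (u + (t:ℂ)*Complex.I) (v + (t:ℂ)*Complex.I) = dLHP u v := by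
  unfold dLHP
  have h1 : (u + (t:ℂ)*Complex.I) - (v + (t:ℂ)*Complex.I) = u - v := by ring
  have h2 : (starRingEnd ℂ) (u + (t:ℂ)*Complex.I) + (v + (t:ℂ)*Complex.I)
      = (starRingEnd ℂ) u + v := by
    simp only [map_add, map_mul, Complex.conj_I, Complex.conj_ofReal]
    ring
  rw [h1, h2]

lemma dLHP_self (u : ℂ) : dLHP u u = 0 := by
  unfold dLHP
  rw [sub_self, zero_div, norm_zero, artanh_zero]

lemma dLHP_eq_artanh_pd {u v : ℂ} (hu : u.re < 0) (hv : v.re < 0) :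
    dLHP u v = artanh (pd (cay u) (cay v)) := by
  rw [pd_cay hu hv]; rfl

lemma dLHP_triangle {u v w : ℂ} (hu : u.re < 0) (hv : v.re < 0) (hw : w.re < 0) :
    dLHP u w ≤ dLHP u v + dLHP v w := by
  rw [dLHP_eq_artanh_pd hu hw, dLHP_eq_artanh_pd hu hv, dLHP_eq_artanh_pd hv hw]
  exact poincare_triangle (cay_mem hu) (cay_mem hv) (cay_mem hw)

lemma normSq_lhp (u w : ℂ) :
    Complex.normSq ((starRingEnd ℂ) u + w) - Complex.normSq (w - u) = 4*u.re*w.re := by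
  simp only [Complex.normSq_apply, Complex.add_re, Complex.add_im, Complex.sub_re,
    Complex.sub_im, Complex.conj_re, Complex.conj_im]
  ring

lemma lhp_div_mem {u w : ℂ} (hu : u.re < 0) (hw : w.re < 0) :
    ‖(w - u)/((starRingEnd ℂ) u + w)‖ < 1 := by
  have hne := conj_add_ne hu hw
  have hlt : Complex.normSq (w - u) < Complex.normSq ((starRingEnd ℂ) u + w) := by
    have := normSq_lhp u w
    nlinarith
  have := abs_lt_abs_of_normSq hlt
  rw [norm_div]
  exact (div_lt_one (norm_pos_iff.2 hne)).mpr this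

lemma dLHP_schwarz {h : ℂ → ℂ} (hd : DifferentiableOn ℂ h (Metric.ball 0 1))
    (hm : ∀ l ∈ Metric.ball (0:ℂ) 1, (h l).re < 0) {a : ℂ}
    (ha : a ∈ Metric.ball (0:ℂ) 1) :
    dLHP (h 0) (h a) ≤ artanh (‖a‖) := by
  have h0mem : (0:ℂ) ∈ Metric.ball (0:ℂ) 1 := by simp
  have hne : ∀ l ∈ Metric.ball (0:ℂ) 1, (starRingEnd ℂ) (h 0) + h l ≠ 0 :=
    fun l hl => conj_add_ne (hm 0 h0mem) (hm l hl)
  have hψd : DifferentiableOn ℂ (fun l => (h l - h 0)/((starRingEnd ℂ) (h 0) + h l))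
      (Metric.ball 0 1) := by
    apply DifferentiableOn.div
    · exact hd.sub_const (h 0)
    · exact hd.const_add _
    · exact hne
  have hψm : Set.MapsTo (fun l => (h l - h 0)/((starRingEnd ℂ) (h 0) + h l))
      (Metric.ball 0 1) (Metric.ball 0 1) := by
    intro l hl
    rw [mem_ball_zero_iff]
    exact lhp_div_mem (hm 0 h0mem) (hm l hl)
  have hψ0 : (fun l => (h l - h 0)/((starRingEnd ℂ) (h 0) + h l)) 0 = 0 := by
    simp only [sub_self, zero_div]
  have haa : ‖a‖ < 1 := mem_ball_zero_iff.mp ha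
  have hsch := Complex.norm_le_norm_of_mapsTo_ball_self hψd (hψm.mono_right ball_subset_closedBall) hψ0 (z := a) haa
  unfold dLHP
  have hnum : ‖(h 0 - h a)/((starRingEnd ℂ) (h 0) + h a)‖
      = ‖(h a - h 0)/((starRingEnd ℂ) (h 0) + h a)‖ := by
    rw [show h 0 - h a = -(h a - h 0) by ring, neg_div, norm_neg]
  rw [hnum]
  exact artanh_le_artanh (norm_nonneg _) hsch haa

lemma dLHP_im_bound {u v : ℂ} (hu : u.re < 0) (hv : v.re < 0) {t : ℝ}
    (ht0 : 0 < t) (ht1 : t < 1)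
    (h : ‖(u - v)/((starRingEnd ℂ) u + v)‖ < t) :
    |v.im - u.im| < (2*t/(1 - t^2)) * (-u.re) := by
  have hne := conj_add_ne hu hv
  have habs : ‖u - v‖ < t * ‖(starRingEnd ℂ) u + v‖ := by
    rw [norm_div, div_lt_iff₀ (norm_pos_iff.2 hne)] at h
    linarith [h]
  have h2 : Complex.normSq (u - v) < t^2 * Complex.normSq ((starRingEnd ℂ) u + v) := by
    rw [← Complex.sq_norm, ← Complex.sq_norm]
    nlinarith [norm_nonneg (u - v), norm_nonneg ((starRingEnd ℂ) u + v)]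
  have e1 : Complex.normSq (u - v) = (u.re - v.re)^2 + (v.im - u.im)^2 := by
    simp only [Complex.normSq_apply, Complex.sub_re, Complex.sub_im]
    ring
  have e2 : Complex.normSq ((starRingEnd ℂ) u + v)
      = (u.re + v.re)^2 + (v.im - u.im)^2 := by
    simp only [Complex.normSq_apply, Complex.add_re, Complex.add_im, Complex.conj_re,
      Complex.conj_im]
    ring
  rw [e1, e2] at h2
  have ht2 : (0:ℝ) < 1 - t^2 := by nlinarith
  have key : (v.im - u.im)^2 * (1 - t^2)^2 < 4*u.re^2*t^2 := by
    nlinarith [sq_nonneg ((1 - t^2)*v.re - (1 + t^2)*u.re), sq_nonneg (v.im - u.im)]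
  rw [div_mul_eq_mul_div, lt_div_iff₀ ht2]
  have hb : (0:ℝ) < 2*t*(-u.re) := by
    apply mul_pos (by positivity)
    linarith
  nlinarith [abs_nonneg (v.im - u.im), _root_.sq_abs (v.im - u.im), key]

end S4
section S5

open Set Metric

lemma mem_punctured_iff {z : ℂ} : z ∈ puncturedDisk ↔ ‖z‖ < 1 ∧ z ≠ 0 := by
  unfold puncturedDisk
  rw [mem_diff, mem_ball_zero_iff]
  simp

lemma re_log_neg {z : ℂ} (hz : z ∈ puncturedDisk) : (Complex.log z).re < 0 := by
  rw [mem_punctured_iff] at hz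
  rw [Complex.log_re]
  exact Real.log_neg (norm_pos_iff.2 hz.2) hz.1

lemma re_neg_of_exp {v w : ℂ} (hv : Complex.exp v = w) (hw : w ∈ puncturedDisk) :
    v.re < 0 := by
  rw [mem_punctured_iff] at hw
  have h1 : Real.exp v.re = ‖w‖ := by rw [← hv, Complex.norm_exp]
  have := hw.1
  rw [← h1] at this
  exact (Real.exp_lt_one_iff).mp this

lemma exp_mem_punctured {v : ℂ} (hv : v.re < 0) : Complex.exp v ∈ puncturedDisk := by
  rw [mem_punctured_iff]
  constructor
  · rw [Complex.norm_exp]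
    exact Real.exp_lt_one_iff.mpr hv
  · exact Complex.exp_ne_zero v

lemma exists_disk {p q : ℂ} (hp : p ∈ puncturedDisk) (hq : q ∈ puncturedDisk) :
    ∃ (φ : ℂ → ℂ) (α : ℂ), DifferentiableOn ℂ φ (ball 0 1) ∧
      MapsTo φ (ball 0 1) puncturedDisk ∧ φ 0 = p ∧ α ∈ ball (0:ℂ) 1 ∧ φ α = q := by
  have hu : (Complex.log p).re < 0 := re_log_neg hp
  have hv : (Complex.log q).re < 0 := re_log_neg hq
  set u := Complex.log p with hudef
  set v := Complex.log q with hvdef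
  have hβ : ‖cay u‖ < 1 := cay_mem hu
  have hβn : ‖-(cay u)‖ < 1 := by rwa [norm_neg]
  have hcv : ‖cay v‖ < 1 := cay_mem hv
  have hα : ‖mb (-(cay u)) (cay v)‖ < 1 := mb_mem hβn hcv
  refine ⟨fun l => Complex.exp (cayInv (mb (cay u) l)), mb (-(cay u)) (cay v), ?_, ?_, ?_,
    mem_ball_zero_iff.mpr hα, ?_⟩
  · apply DifferentiableOn.cexp
    apply DifferentiableOn.div
    · exact (mb_diff hβ).sub_const 1
    · exact (mb_diff hβ).add_const 1
    · intro l hl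
      exact meml_ne_neg_one (mb_mem hβ (mem_ball_zero_iff.mp hl))
  · intro l hl
    exact exp_mem_punctured (cayInv_re (mb_mem hβ (mem_ball_zero_iff.mp hl)))
  · show Complex.exp (cayInv (mb (cay u) 0)) = p
    rw [mb_zero, cayInv_cay hu]
    rw [hudef]
    exact Complex.exp_log (mem_punctured_iff.mp hp).2
  · show Complex.exp (cayInv (mb (cay u) (mb (-(cay u)) (cay v)))) = q
    rw [mb_right_inv hβ hcv, cayInv_cay hv, hvdef]
    exact Complex.exp_log (mem_punctured_iff.mp hq).2

lemma lempert_set_nonneg {p q : ℂ} :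
    ∀ r ∈ { r | ∃ (φ : ℂ → ℂ) (α : ℂ), DifferentiableOn ℂ φ (ball 0 1) ∧
      MapsTo φ (ball 0 1) puncturedDisk ∧ φ 0 = p ∧ α ∈ ball (0:ℂ) 1 ∧ φ α = q ∧
      r = artanh (‖α‖) }, 0 ≤ r := by
  rintro r ⟨φ, α, _, _, _, hα, _, rfl⟩
  exact artanh_nonneg (norm_nonneg α) (mem_ball_zero_iff.mp hα)

lemma lempert_nonneg (p q : ℂ) : 0 ≤ lempert puncturedDisk p q :=
  Real.sInf_nonneg lempert_set_nonneg

lemma link {p q : ℂ} (hp : p ∈ puncturedDisk) (hq : q ∈ puncturedDisk) {vp : ℂ}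
    (hvp : Complex.exp vp = p) {ε : ℝ} (hε : 0 < ε) :
    ∃ vq : ℂ, Complex.exp vq = q ∧ vq.re < 0 ∧
      dLHP vp vq < lempert puncturedDisk p q + ε := by
  have hne : Set.Nonempty { r | ∃ (φ : ℂ → ℂ) (α : ℂ), DifferentiableOn ℂ φ (ball 0 1) ∧
      MapsTo φ (ball 0 1) puncturedDisk ∧ φ 0 = p ∧ α ∈ ball (0:ℂ) 1 ∧ φ α = q ∧
      r = artanh (‖α‖) } := by
    obtain ⟨φ, α, h1, h2, h3, h4, h5⟩ := exists_disk hp hq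
    exact ⟨artanh (‖α‖), φ, α, h1, h2, h3, h4, h5, rfl⟩
  obtain ⟨r, hrS, hrlt⟩ := Real.lt_sInf_add_pos hne hε
  obtain ⟨φ, α, hφd, hφm, hφ0, hα, hφα, hreq⟩ := hrS
  have hnz : ∀ l ∈ ball (0:ℂ) 1, φ l ≠ 0 := fun l hl => (mem_punctured_iff.mp (hφm hl)).2
  obtain ⟨h, hhd, hhe⟩ := exists_log hφd hnz
  have hre : ∀ l ∈ ball (0:ℂ) 1, (h l).re < 0 :=
    fun l hl => re_neg_of_exp (hhe l hl) (hφm hl)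
  have h0mem : (0:ℂ) ∈ ball (0:ℂ) 1 := by simp
  have hh0 : Complex.exp (h 0) = p := by rw [hhe 0 h0mem, hφ0]
  have hhα : Complex.exp (h α) = q := by rw [hhe α hα, hφα]
  have hex : Complex.exp vp = Complex.exp (h 0) := by rw [hvp, hh0]
  obtain ⟨n, hn⟩ := Complex.exp_eq_exp_iff_exists_int.mp hex
  refine ⟨h α + (n:ℂ) * (2 * Real.pi * Complex.I), ?_, ?_, ?_⟩
  · rw [Complex.exp_add, hhα, Complex.exp_int_mul_two_pi_mul_I, mul_one]
  · have : Complex.exp (h α + (n:ℂ) * (2 * Real.pi * Complex.I)) = q := by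
      rw [Complex.exp_add, hhα, Complex.exp_int_mul_two_pi_mul_I, mul_one]
    exact re_neg_of_exp this hq
  · have hc : (n:ℂ) * (2 * (Real.pi:ℂ) * Complex.I)
        = ((2 * Real.pi * (n:ℝ) : ℝ):ℂ) * Complex.I := by push_cast; ring
    have heq : dLHP vp (h α + (n:ℂ) * (2 * Real.pi * Complex.I)) = dLHP (h 0) (h α) := by
      rw [hn, hc]
      exact dLHP_translate (h 0) (h α) (2 * Real.pi * (n:ℝ))
    rw [heq]
    calc dLHP (h 0) (h α) ≤ artanh (‖α‖) := dLHP_schwarz hhd hre hα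
    _ = r := hreq.symm
    _ < lempert puncturedDisk p q + ε := hrlt

lemma chain : ∀ (n : ℕ) (pp : ℕ → ℂ), (∀ i ≤ n, pp i ∈ puncturedDisk) →
    ∀ v0 : ℂ, Complex.exp v0 = pp 0 → ∀ ε : ℝ, 0 < ε →
    ∃ v : ℂ, Complex.exp v = pp n ∧
      dLHP v0 v < (∑ i ∈ Finset.range n, lempert puncturedDisk (pp i) (pp (i+1))) + ε := by
  intro n
  induction n with
  | zero =>
    intro pp hpp v0 hv0 ε hε
    exact ⟨v0, hv0, by simpa [dLHP_self] using hε⟩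
  | succ n ih =>
    intro pp hpp v0 hv0 ε hε
    obtain ⟨v, hv, hvd⟩ := ih pp (fun i hi => hpp i (le_trans hi (Nat.le_succ n))) v0 hv0
      (ε/2) (half_pos hε)
    obtain ⟨vq, hvq, hvqre, hvqd⟩ := link (hpp n (Nat.le_succ n)) (hpp (n+1) le_rfl) hv
      (half_pos hε)
    refine ⟨vq, hvq, ?_⟩
    have hv0re : v0.re < 0 := re_neg_of_exp hv0 (hpp 0 (Nat.zero_le _))
    have hvre : v.re < 0 := re_neg_of_exp hv (hpp n (Nat.le_succ n))
    have htri := dLHP_triangle hv0re hvre hvqre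
    rw [Finset.sum_range_succ]
    linarith

lemma kob_lift {z w : ℂ} (hz : z ∈ puncturedDisk) (hw : w ∈ puncturedDisk) {R : ℝ}
    (hk : kobayashi puncturedDisk z w < R) :
    ∃ v : ℂ, Complex.exp v = w ∧ v.re < 0 ∧ dLHP (Complex.log z) v < R := by
  have hne : Set.Nonempty { s | ∃ (n : ℕ) (p : ℕ → ℂ), p 0 = z ∧ p n = w ∧
      (∀ i ≤ n, p i ∈ puncturedDisk) ∧
      s = ∑ i ∈ Finset.range n, lempert puncturedDisk (p i) (p (i+1)) } := by
    refine ⟨lempert puncturedDisk z w, 1, fun i => if i = 0 then z else w, by simp, by simp, ?_, by simp⟩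
    intro i hi
    interval_cases i
    · simpa using hz
    · simpa using hw
  have hbdd : BddBelow { s | ∃ (n : ℕ) (p : ℕ → ℂ), p 0 = z ∧ p n = w ∧
      (∀ i ≤ n, p i ∈ puncturedDisk) ∧
      s = ∑ i ∈ Finset.range n, lempert puncturedDisk (p i) (p (i+1)) } := by
    refine ⟨0, ?_⟩
    rintro s ⟨n, p, _, _, _, rfl⟩
    exact Finset.sum_nonneg fun i _ => lempert_nonneg _ _
  rw [kobayashi] at hk
  rw [csInf_lt_iff hbdd hne] at hk
  obtain ⟨s, ⟨n, pp, hp0, hpn, hmem, rfl⟩, hslt⟩ := hk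
  have hzne : z ≠ 0 := (mem_punctured_iff.mp hz).2
  have hlog : Complex.exp (Complex.log z) = pp 0 := by rw [Complex.exp_log hzne, hp0]
  obtain ⟨v, hv, hvd⟩ := chain n pp hmem (Complex.log z) hlog
    (R - ∑ i ∈ Finset.range n, lempert puncturedDisk (pp i) (pp (i+1))) (by linarith)
  refine ⟨v, by rw [← hpn]; exact hv, ?_, by linarith⟩
  exact re_neg_of_exp hv (by rw [hpn]; exact hw)

end S5
section S6

open Set Metric

lemma pd_zero_left (x : ℂ) : pd 0 x = ‖x‖ := by
  unfold pd
  simp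

lemma squeezing_eq {z : ℂ} (hz : z ∈ puncturedDisk) :
    squeezing puncturedDisk z = ‖z‖ := by
  obtain ⟨hz1, hz0⟩ := mem_punctured_iff.mp hz
  have hzb : z ∈ ball (0:ℂ) 1 := mem_ball_zero_iff.mpr hz1
  -- the Möbius involution
  set f₀ : ℂ → ℂ := fun w => (z - w)/(1 - (starRingEnd ℂ) z * w) with hf₀def
  have hf₀mb : ∀ w : ℂ, f₀ w = mb z (-w) := by
    intro w
    rw [hf₀def]
    unfold mb
    simp only []
    congr 1
    · ring
    · ring
  have hf₀mem : ∀ w : ℂ, ‖w‖ < 1 → ‖f₀ w‖ < 1 := by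
    intro w hw
    rw [hf₀mb]
    exact mb_mem hz1 (by rwa [norm_neg])
  have hf₀inv : ∀ w : ℂ, ‖w‖ < 1 → f₀ (f₀ w) = w := by
    intro w hw
    have hd1 : (1:ℂ) - (starRingEnd ℂ) z * w ≠ 0 := one_sub_mul_ne hz1 hw
    have hd2 : (1:ℂ) - (starRingEnd ℂ) z * z ≠ 0 := one_sub_mul_ne hz1 hz1
    have hnum : z - (z - w)/(1 - (starRingEnd ℂ) z * w)
        = w * (1 - (starRingEnd ℂ) z * z)/(1 - (starRingEnd ℂ) z * w) := by
      rw [eq_div_iff hd1, sub_mul, div_mul_cancel₀ _ hd1]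
      ring
    have hden : 1 - (starRingEnd ℂ) z * ((z - w)/(1 - (starRingEnd ℂ) z * w))
        = (1 - (starRingEnd ℂ) z * z)/(1 - (starRingEnd ℂ) z * w) := by
      field_simp
      ring
    show (z - ((z - w)/(1 - (starRingEnd ℂ) z * w)))
        / (1 - (starRingEnd ℂ) z * ((z - w)/(1 - (starRingEnd ℂ) z * w))) = w
    rw [hnum, hden]
    exact div_div_cancel_helper w _ _ hd1 hd2
  have hmemD : ∀ w : ℂ, w ∈ puncturedDisk → ‖w‖ < 1 :=
    fun w hw => (mem_punctured_iff.mp hw).1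
  -- membership of |z| in the squeezing set
  have hmemA : ‖z‖ ∈ { r | ∃ f : ℂ → ℂ, DifferentiableOn ℂ f puncturedDisk ∧
      InjOn f puncturedDisk ∧ MapsTo f puncturedDisk (ball 0 1) ∧
      f z = 0 ∧ ball (0:ℂ) r ⊆ f '' puncturedDisk } := by
    refine ⟨f₀, ?_, ?_, ?_, ?_, ?_⟩
    · apply DifferentiableOn.div
      · exact (differentiable_id.const_sub z).differentiableOn
      · exact (((differentiable_const _).mul differentiable_id).const_sub 1).differentiableOn
      · intro w hw
        exact one_sub_mul_ne hz1 (hmemD w hw)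
    · intro u hu v hv huv
      have h1 := hf₀inv u (hmemD u hu)
      have h2 := hf₀inv v (hmemD v hv)
      rw [← h1, ← h2, huv]
    · intro w hw
      exact mem_ball_zero_iff.mpr (hf₀mem w (hmemD w hw))
    · rw [hf₀def]
      simp
    · intro y hy
      rw [mem_ball_zero_iff] at hy
      have hy1 : ‖y‖ < 1 := lt_trans hy hz1
      have hfy1 : ‖f₀ y‖ < 1 := hf₀mem y hy1
      have hfyne : f₀ y ≠ 0 := by
        intro h
        rw [hf₀def] at h
        simp only [] at h
        rw [div_eq_zero_iff] at h
        rcases h with h | h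
        · have : y = z := by linear_combination -h
          rw [this] at hy
          exact lt_irrefl _ hy
        · exact one_sub_mul_ne hz1 hy1 h
      exact ⟨f₀ y, mem_punctured_iff.mpr ⟨hfy1, hfyne⟩, hf₀inv y hy1⟩
  -- upper bound
  have hupper : ∀ r ∈ { r | ∃ f : ℂ → ℂ, DifferentiableOn ℂ f puncturedDisk ∧
      InjOn f puncturedDisk ∧ MapsTo f puncturedDisk (ball 0 1) ∧
      f z = 0 ∧ ball (0:ℂ) r ⊆ f '' puncturedDisk }, r ≤ ‖z‖ := by
    rintro r ⟨f, hfd, hfi, hfm, hfz, hball⟩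
    have hfd' : DifferentiableOn ℂ f (ball (0:ℂ) 1 \ {0}) := hfd
    have hnb : ball (0:ℂ) 1 ∈ nhds (0:ℂ) := isOpen_ball.mem_nhds (mem_ball_self one_pos)
    have hbdd : BddAbove (norm ∘ f '' (ball (0:ℂ) 1 \ {0})) := by
      refine ⟨1, ?_⟩
      rintro y ⟨w, hw, rfl⟩
      exact (le_of_lt (mem_ball_zero_iff.mp (hfm hw)))
    have hF := Complex.differentiableOn_update_limUnder_of_bddAbove hnb hfd' hbdd
    set F : ℂ → ℂ := Function.update f 0 (Filter.limUnder (nhdsWithin (0:ℂ) {(0:ℂ)}ᶜ) f) with hFdef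
    have hFeq : ∀ w : ℂ, w ≠ 0 → F w = f w := by
      intro w hw
      rw [hFdef]
      exact Function.update_of_ne hw _ _
    -- distinct values
    have hhalf : (1/2 : ℂ) ∈ puncturedDisk := by
      rw [mem_punctured_iff]
      norm_num
    have hquarter : (1/4 : ℂ) ∈ puncturedDisk := by
      rw [mem_punctured_iff]
      norm_num
    have hfne : f (1/2 : ℂ) ≠ f (1/4 : ℂ) := by
      intro h
      have := hfi hhalf hquarter h
      norm_num at this
    -- closure facts
    have hcl : ∀ ρ : ℝ, 0 < ρ → (0:ℂ) ∈ closure (ball (0:ℂ) ρ \ {0} : Set ℂ) := by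
      intro ρ hρ
      rw [Metric.mem_closure_iff]
      intro ε hε
      refine ⟨(min (ε/2) (ρ/2) : ℝ), ⟨?_, ?_⟩, ?_⟩
      · rw [mem_ball_zero_iff]
        show ‖((min (ε/2) (ρ/2) : ℝ) : ℂ)‖ < ρ
        rw [Complex.norm_real, Real.norm_eq_abs]
        rw [abs_of_pos (by positivity)]
        calc min (ε/2) (ρ/2) ≤ ρ/2 := min_le_right _ _
        _ < ρ := by linarith
      · simp only [mem_singleton_iff]
        intro h
        have : (min (ε/2) (ρ/2) : ℝ) = 0 := by exact_mod_cast h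
        have : (0:ℝ) < min (ε/2) (ρ/2) := lt_min (by linarith) (by linarith)
        linarith
      · rw [Complex.dist_eq]
        rw [zero_sub, norm_neg, Complex.norm_real, Real.norm_eq_abs]
        rw [abs_of_pos (by positivity)]
        calc min (ε/2) (ρ/2) ≤ ε/2 := min_le_left _ _
        _ < ε := by linarith
    have hclD : (0:ℂ) ∈ closure puncturedDisk := by
      have := hcl 1 one_pos
      exact this
    have hFc : ContinuousAt F 0 :=
      (hF.differentiableAt (isOpen_ball.mem_nhds (mem_ball_self one_pos))).continuousAt
    have hF0le : ‖F 0‖ ≤ 1 := by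
      haveI : (nhdsWithin (0:ℂ) puncturedDisk).NeBot :=
        mem_closure_iff_nhdsWithin_neBot.mp hclD
      have htd : Filter.Tendsto (fun w => ‖F w‖) (nhdsWithin (0:ℂ) puncturedDisk)
          (nhds (‖F 0‖)) :=
        (continuous_norm.continuousAt.tendsto.comp hFc.continuousWithinAt)
      apply le_of_tendsto htd
      apply eventually_nhdsWithin_of_forall
      intro w hw
      rw [hFeq w (mem_punctured_iff.mp hw).2]
      exact (le_of_lt (mem_ball_zero_iff.mp (hfm hw)))
    have hnotconst : ¬ ∃ cst, ∀ w ∈ ball (0:ℂ) 1, F w = cst := by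
      rintro ⟨cst, hcst⟩
      apply hfne
      have e1 := hcst (1/2 : ℂ) (by rw [mem_ball_zero_iff]; norm_num)
      have e2 := hcst (1/4 : ℂ) (by rw [mem_ball_zero_iff]; norm_num)
      rw [hFeq _ (by norm_num)] at e1
      rw [hFeq _ (by norm_num)] at e2
      rw [e1, e2]
    have hF0lt : ‖F 0‖ < 1 := by
      rcases lt_or_eq_of_le hF0le with h | h
      · exact h
      · exfalso
        have hmax : IsMaxOn (norm ∘ F) (ball (0:ℂ) 1) 0 := by
          intro w hw
          simp only [Set.mem_setOf_eq, Function.comp_apply]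
          rcases eq_or_ne w 0 with rfl | hw0
          · exact le_rfl
          · rw [hFeq w hw0]
            have h1 : ‖f w‖ < 1 :=
              mem_ball_zero_iff.mp (hfm ⟨hw, hw0⟩)
            have h2 : ‖F 0‖ = 1 := h
            rw [h2]
            exact le_of_lt h1
        have := Complex.eqOn_of_isPreconnected_of_isMaxOn_norm
          (convex_ball (0:ℂ) 1).isPreconnected isOpen_ball hF
          (mem_ball_self one_pos) hmax
        exact hnotconst ⟨F 0, fun w hw => this hw⟩
    have hFmaps : MapsTo F (ball (0:ℂ) 1) (ball (0:ℂ) 1) := by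
      intro w hw
      rcases eq_or_ne w 0 with rfl | hw0
      · exact mem_ball_zero_iff.mpr hF0lt
      · rw [mem_ball_zero_iff, hFeq w hw0]
        exact mem_ball_zero_iff.mp (hfm ⟨hw, hw0⟩)
    -- r ≤ |F 0|
    have hge : r ≤ ‖F 0‖ := by
      by_contra hlt
      push_neg at hlt
      have hmemball : F 0 ∈ ball (0:ℂ) r := mem_ball_zero_iff.mpr hlt
      obtain ⟨w₀, hw₀D, hfw₀⟩ := hball hmemball
      obtain ⟨hw₀b, hw₀0⟩ := mem_punctured_iff.mp hw₀D
      have hw₀pos : 0 < ‖w₀‖ := norm_pos_iff.2 hw₀0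
      have hFa : AnalyticOnNhd ℂ F (ball (0:ℂ) 1) := hF.analyticOnNhd isOpen_ball
      rcases hFa.is_constant_or_isOpen (convex_ball (0:ℂ) 1).isPreconnected with
        ⟨cst, hcst⟩ | hopen
      · exact hnotconst ⟨cst, hcst⟩
      · set r₂ : ℝ := min (‖w₀‖ / 4) ((1 - ‖w₀‖)/2) with hr₂def
        have hr₂pos : 0 < r₂ := lt_min (by positivity) (by linarith)
        have hr₂a : r₂ ≤ ‖w₀‖ / 4 := min_le_left _ _
        have hr₂b : r₂ ≤ (1 - ‖w₀‖)/2 := min_le_right _ _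
        have hVD : ∀ v ∈ ball w₀ r₂, ‖w₀‖ / 2 < ‖v‖ ∧ v ∈ puncturedDisk := by
          intro v hv
          rw [Metric.mem_ball, dist_eq_norm] at hv
          have hlow : ‖w₀‖ - ‖v‖ ≤ ‖w₀ - v‖ := norm_sub_norm_le w₀ v
          have hup : ‖v‖ - ‖w₀‖ ≤ ‖v - w₀‖ := norm_sub_norm_le v w₀
          have hrev : ‖w₀ - v‖ = ‖v - w₀‖ := norm_sub_rev _ _
          have hnv : ‖v‖ = ‖v‖ := rfl
          have hnw : ‖w₀‖ = ‖w₀‖ := rfl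
          rw [hrev, hnv, hnw] at hlow
          rw [hnv, hnw] at hup
          have hbig : ‖w₀‖ / 2 < ‖v‖ := by linarith
          have hvpos : 0 < ‖v‖ := by linarith
          refine ⟨hbig, mem_punctured_iff.mpr ⟨by linarith, ?_⟩⟩
          intro h
          rw [h] at hvpos
          simp at hvpos
        have hVb : ball w₀ r₂ ⊆ ball (0:ℂ) 1 := fun v hv =>
          mem_ball_zero_iff.mpr (mem_punctured_iff.mp (hVD v hv).2).1
        have hVimage : IsOpen (F '' ball w₀ r₂) := hopen _ hVb isOpen_ball
        have hFw₀ : F w₀ = F 0 := by rw [hFeq w₀ hw₀0, hfw₀]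
        have hF0mem : F 0 ∈ F '' ball w₀ r₂ := ⟨w₀, mem_ball_self hr₂pos, hFw₀⟩
        have hU'D : (ball (0:ℂ) (‖w₀‖/2) \ {0} : Set ℂ) ⊆ puncturedDisk := by
          rintro u ⟨hu1, hu2⟩
          rw [mem_ball_zero_iff] at hu1
          exact mem_punctured_iff.mpr ⟨lt_trans hu1 (by linarith), hu2⟩
        have hU'cl : (0:ℂ) ∈ closure (ball (0:ℂ) (‖w₀‖/2) \ {0} : Set ℂ) :=
          hcl _ (by positivity)
        haveI hne' : (nhdsWithin (0:ℂ) (ball (0:ℂ) (‖w₀‖/2) \ {0} : Set ℂ)).NeBot :=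
          mem_closure_iff_nhdsWithin_neBot.mp hU'cl
        have hFtd : Filter.Tendsto F
            (nhdsWithin (0:ℂ) (ball (0:ℂ) (‖w₀‖/2) \ {0} : Set ℂ)) (nhds (F 0)) :=
          hFc.continuousWithinAt
        have hF0cl : F 0 ∈ closure (F '' (ball (0:ℂ) (‖w₀‖/2) \ {0} : Set ℂ)) := by
          apply mem_closure_of_tendsto hFtd
          apply eventually_nhdsWithin_of_forall
          intro u hu
          exact mem_image_of_mem F hu
        obtain ⟨y, hyV, hyU⟩ := (_root_.mem_closure_iff.mp hF0cl) (F '' ball w₀ r₂) hVimage hF0mem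
        obtain ⟨v', hv'mem, hv'y⟩ := hyV
        obtain ⟨uu, huu, huuy⟩ := hyU
        have huu0 : uu ≠ 0 := huu.2
        have huusm : ‖uu‖ < ‖w₀‖/2 := mem_ball_zero_iff.mp huu.1
        have hv'big : ‖w₀‖ / 2 < ‖v'‖ := (hVD v' hv'mem).1
        have hneq : uu ≠ v' := by
          intro h
          rw [h] at huusm
          linarith
        apply hneq
        apply hfi (hU'D huu) (hVD v' hv'mem).2
        have hv'0 : v' ≠ 0 := (mem_punctured_iff.mp (hVD v' hv'mem).2).2
        rw [← hFeq uu huu0, ← hFeq v' hv'0, huuy, hv'y]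
    calc r ≤ ‖F 0‖ := hge
    _ = pd (F 0) 0 := by unfold pd; simp
    _ = pd (F 0) (F z) := by rw [hFeq z hz0, hfz]
    _ ≤ pd 0 z := schwarz_pick hF hFmaps (mem_ball_self one_pos) hzb
    _ = ‖z‖ := pd_zero_left z
  -- conclude
  apply le_antisymm
  · exact csSup_le ⟨‖z‖, hmemA⟩ hupper
  · exact le_csSup ⟨‖z‖, hupper⟩ hmemA

end S6
section S7

open Set Metric

lemma fridman_ge {z : ℂ} (hz : z ∈ puncturedDisk) :
    Real.tanh (Real.arsinh (Real.pi / (-Real.log (‖z‖))) / 2)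
      ≤ fridman puncturedDisk z := by
  obtain ⟨hz1, hz0⟩ := mem_punctured_iff.mp hz
  have hapos : 0 < ‖z‖ := norm_pos_iff.2 hz0
  have hs : 0 < -Real.log (‖z‖) := by
    have := Real.log_neg hapos hz1
    linarith
  set s : ℝ := -Real.log (‖z‖) with hsdef
  have hπs : 0 < Real.pi / s := div_pos Real.pi_pos hs
  set R : ℝ := Real.arsinh (Real.pi / s) / 2 with hRdef
  have hR : 0 < R := by
    have := arsinh_pos hπs
    rw [hRdef]; linarith
  set τ : ℝ := Real.tanh R with hτdef
  have hτ0 : 0 < τ := tanh_pos hR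
  have hτ1 : τ < 1 := tanh_lt_one R
  have hsinh : Real.sinh (2*R) = Real.pi / s := by
    rw [hRdef, show 2*(Real.arsinh (Real.pi / s) / 2) = Real.arsinh (Real.pi / s) by ring,
      Real.sinh_arsinh]
  have hτkey : 2*τ/(1 - τ^2) = Real.pi / s := by
    rw [hτdef, two_tanh_div, hsinh]
  have hu : (Complex.log z).re < 0 := re_log_neg hz
  set u : ℂ := Complex.log z with hudef
  have hure : -u.re = s := by
    rw [hudef, Complex.log_re, hsdef]
  have hβ : ‖cay u‖ < 1 := cay_mem hu
  -- scaled parameter bound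
  have hscale : ∀ l : ℂ, l ∈ ball (0:ℂ) 1 → ‖(τ:ℂ) * l‖ < 1 := by
    intro l hl
    rw [mem_ball_zero_iff] at hl
    have hl' : ‖l‖ < 1 := hl
    rw [norm_mul, Complex.norm_real, Real.norm_eq_abs, abs_of_pos hτ0]
    nlinarith [norm_nonneg l, mul_lt_mul_of_pos_left hl' hτ0]
  have hml : ∀ l : ℂ, l ∈ ball (0:ℂ) 1 → ‖mb (cay u) ((τ:ℂ) * l)‖ < 1 :=
    fun l hl => mb_mem hβ (hscale l hl)
  -- the candidate map
  set f : ℂ → ℂ := fun l => Complex.exp (cayInv (mb (cay u) ((τ:ℂ) * l))) with hfdef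
  have hgre : ∀ l : ℂ, l ∈ ball (0:ℂ) 1 → (cayInv (mb (cay u) ((τ:ℂ) * l))).re < 0 :=
    fun l hl => cayInv_re (hml l hl)
  -- pd bound for the g values
  have hpdb : ∀ l : ℂ, l ∈ ball (0:ℂ) 1 →
      ‖(u - cayInv (mb (cay u) ((τ:ℂ) * l)))
        / ((starRingEnd ℂ) u + cayInv (mb (cay u) ((τ:ℂ) * l)))‖ < τ := by
    intro l hl
    have h1 : pd (cay u) (cay (cayInv (mb (cay u) ((τ:ℂ) * l))))
        = ‖(u - cayInv (mb (cay u) ((τ:ℂ) * l)))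
          / ((starRingEnd ℂ) u + cayInv (mb (cay u) ((τ:ℂ) * l)))‖ :=
      pd_cay hu (hgre l hl)
    rw [cay_cayInv (hml l hl)] at h1
    rw [← h1]
    have h2 : pd (cay u) (mb (cay u) ((τ:ℂ) * l))
        = pd (mb (cay u) 0) (mb (cay u) ((τ:ℂ) * l)) := by rw [mb_zero]
    rw [h2, pd_mb_invariant hβ (by simp) (hscale l hl), pd_zero_left, norm_mul,
      Complex.norm_real, Real.norm_eq_abs, abs_of_pos hτ0]
    rw [mem_ball_zero_iff] at hl
    have hl' : ‖l‖ < 1 := hl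
    nlinarith [norm_nonneg l, mul_lt_mul_of_pos_left hl' hτ0]
  -- the Im bound
  have himb : ∀ l : ℂ, l ∈ ball (0:ℂ) 1 →
      |(cayInv (mb (cay u) ((τ:ℂ) * l))).im - u.im| < Real.pi := by
    intro l hl
    have := dLHP_im_bound hu (hgre l hl) hτ0 hτ1 (hpdb l hl)
    rw [hτkey, hure] at this
    rw [show Real.pi / s * s = Real.pi from by field_simp] at this
    exact this
  -- properties of f
  have hfd : DifferentiableOn ℂ f (ball 0 1) := by
    rw [hfdef]
    apply DifferentiableOn.cexp
    apply DifferentiableOn.div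
    · apply DifferentiableOn.sub_const
      apply DifferentiableOn.div
      · exact (((differentiable_const _).mul differentiable_id).add_const _).differentiableOn
      · exact ((differentiable_const _).mul
            ((differentiable_const _).mul differentiable_id)).const_add 1 |>.differentiableOn
      · intro l hl
        exact one_add_mul_ne hβ (hscale l hl)
    · apply DifferentiableOn.add_const
      apply DifferentiableOn.div
      · exact (((differentiable_const _).mul differentiable_id).add_const _).differentiableOn
      · exact ((differentiable_const _).mul
            ((differentiable_const _).mul differentiable_id)).const_add 1 |>.differentiableOn
      · intro l hl
        exact one_add_mul_ne hβ (hscale l hl)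
    · intro l hl
      exact meml_ne_neg_one (hml l hl)
  have hfm : MapsTo f (ball 0 1) puncturedDisk := by
    intro l hl
    exact exp_mem_punctured (hgre l hl)
  have hf0 : f 0 = z := by
    rw [hfdef]
    simp only []
    rw [mul_zero, mb_zero, cayInv_cay hu, hudef]
    exact Complex.exp_log hz0
  have hτC : (τ:ℂ) ≠ 0 := by
    exact_mod_cast ne_of_gt hτ0
  have hfinj : InjOn f (ball 0 1) := by
    intro l₁ h₁ l₂ h₂ heq
    rw [hfdef] at heq
    simp only [] at heq
    obtain ⟨n, hn⟩ := Complex.exp_eq_exp_iff_exists_int.mp heq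
    have him : (cayInv (mb (cay u) ((τ:ℂ) * l₁))).im
        = (cayInv (mb (cay u) ((τ:ℂ) * l₂))).im + (n:ℝ) * (2*Real.pi) := by
      have := congrArg Complex.im hn
      simpa [Complex.add_im, Complex.mul_im, Complex.mul_re, Complex.I_re, Complex.I_im,
        Complex.ofReal_re, Complex.ofReal_im, Complex.intCast_re, Complex.intCast_im]
        using this
    have hb1 := himb l₁ h₁
    have hb2 := himb l₂ h₂
    have hn0 : n = 0 := by
      have habs : |2*Real.pi*(n:ℝ)| < 2*Real.pi := by
        have he : (cayInv (mb (cay u) ((τ:ℂ) * l₁))).im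
            - (cayInv (mb (cay u) ((τ:ℂ) * l₂))).im = 2*Real.pi*(n:ℝ) := by
          rw [him]; ring
        rw [← he]
        have hsplit : (cayInv (mb (cay u) ((τ:ℂ) * l₁))).im
              - (cayInv (mb (cay u) ((τ:ℂ) * l₂))).im
            = ((cayInv (mb (cay u) ((τ:ℂ) * l₁))).im - u.im)
              - ((cayInv (mb (cay u) ((τ:ℂ) * l₂))).im - u.im) := by ring
        rw [hsplit]
        calc |((cayInv (mb (cay u) ((τ:ℂ) * l₁))).im - u.im)
              - ((cayInv (mb (cay u) ((τ:ℂ) * l₂))).im - u.im)|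
            ≤ |(cayInv (mb (cay u) ((τ:ℂ) * l₁))).im - u.im|
              + |(cayInv (mb (cay u) ((τ:ℂ) * l₂))).im - u.im| := abs_sub _ _
        _ < 2*Real.pi := by linarith
      have h4 : 2*Real.pi*|(n:ℝ)| < 2*Real.pi := by
        rw [show |2*Real.pi*(n:ℝ)| = 2*Real.pi*|(n:ℝ)| from by
          rw [abs_mul, abs_of_pos (by positivity : (0:ℝ) < 2*Real.pi)]] at habs
        exact habs
      have h5 : |(n:ℝ)| < 1 := by nlinarith [Real.pi_pos]
      have h6 : ((|n| : ℤ) : ℝ) < 1 := by push_cast; exact h5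
      have h7 : |n| < 1 := by exact_mod_cast h6
      have h8 := abs_lt.mp h7
      omega
    rw [hn0] at hn
    simp only [Int.cast_zero, zero_mul, add_zero] at hn
    -- recover equality
    have e1 : cay (cayInv (mb (cay u) ((τ:ℂ) * l₁))) = cay (cayInv (mb (cay u) ((τ:ℂ) * l₂))) := by
      rw [hn]
    rw [cay_cayInv (hml l₁ h₁), cay_cayInv (hml l₂ h₂)] at e1
    have e2 : mb (-(cay u)) (mb (cay u) ((τ:ℂ) * l₁))
        = mb (-(cay u)) (mb (cay u) ((τ:ℂ) * l₂)) := by rw [e1]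
    rw [mb_left_inv hβ (hscale l₁ h₁), mb_left_inv hβ (hscale l₂ h₂)] at e2
    exact mul_left_cancel₀ hτC e2
  have hcontain : kobayashiBall puncturedDisk z R ⊆ f '' (ball 0 1) := by
    rintro w ⟨hwD, hwk⟩
    obtain ⟨v, hv, hvre, hvd⟩ := kob_lift hz hwD hwk
    have hvd' : ‖(u - v)/((starRingEnd ℂ) u + v)‖ < τ := by
      by_contra hge
      push_neg at hge
      have hlt1 : ‖(u - v)/((starRingEnd ℂ) u + v)‖ < 1 := by
        rw [show u - v = -(v - u) by ring, neg_div, norm_neg]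
        exact lhp_div_mem hu hvre
      have := artanh_le_artanh (le_of_lt hτ0) hge hlt1
      have hRa : artanh τ = R := by rw [hτdef, artanh_tanh]
      have hvd2 : artanh (‖(u - v)/((starRingEnd ℂ) u + v)‖) < R := hvd
      linarith [hvd2, hRa ▸ this]
    have hpdcv : pd (cay u) (cay v) < τ := by
      rw [pd_cay hu hvre]
      exact hvd'
    have hμ : ‖mb (-(cay u)) (cay v)‖ < τ := by
      rw [← pd_eq_abs_mb]
      exact hpdcv
    refine ⟨mb (-(cay u)) (cay v) / (τ:ℂ), ?_, ?_⟩
    · rw [mem_ball_zero_iff]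
      show ‖mb (-(cay u)) (cay v) / (τ:ℂ)‖ < 1
      rw [norm_div, Complex.norm_real, Real.norm_eq_abs, abs_of_pos hτ0, div_lt_one hτ0]
      exact hμ
    · rw [hfdef]
      simp only []
      rw [mul_div_cancel₀ _ hτC, mb_right_inv hβ (cay_mem hvre), cayInv_cay hvre, hv]
  -- conclude
  have hmem : Real.tanh R ∈ { t | ∃ r > (0:ℝ), ∃ f : ℂ → ℂ, DifferentiableOn ℂ f (ball 0 1) ∧
      InjOn f (ball 0 1) ∧ MapsTo f (ball 0 1) puncturedDisk ∧ f 0 = z ∧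
      kobayashiBall puncturedDisk z r ⊆ f '' (ball 0 1) ∧ t = Real.tanh r } :=
    ⟨R, hR, f, hfd, hfinj, hfm, hf0, hcontain, rfl⟩
  have hbdd : BddAbove { t | ∃ r > (0:ℝ), ∃ f : ℂ → ℂ, DifferentiableOn ℂ f (ball 0 1) ∧
      InjOn f (ball 0 1) ∧ MapsTo f (ball 0 1) puncturedDisk ∧ f 0 = z ∧
      kobayashiBall puncturedDisk z r ⊆ f '' (ball 0 1) ∧ t = Real.tanh r } := by
    refine ⟨1, ?_⟩
    rintro t ⟨r, _, _, _, _, _, _, _, rfl⟩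
    exact (tanh_lt_one r).le
  exact le_csSup hbdd hmem

end S7
section S8

open Set Metric Filter

lemma quotient_bound {z : ℂ} (hz : z ∈ puncturedDisk)
    (hsmall : ‖z‖ < Real.exp (-Real.pi)) :
    0 ≤ squeezing puncturedDisk z / fridman puncturedDisk z ∧
    squeezing puncturedDisk z / fridman puncturedDisk z
      ≤ 12 * Real.sqrt (‖z‖) := by
  obtain ⟨hz1, hz0⟩ := mem_punctured_iff.mp hz
  have ha0 : 0 < ‖z‖ := norm_pos_iff.2 hz0
  set a : ℝ := ‖z‖ with hadef
  have hsπ : Real.pi < -Real.log a := by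
    have h1 : Real.log a < Real.log (Real.exp (-Real.pi)) := Real.log_lt_log ha0 hsmall
    rw [Real.log_exp] at h1
    linarith
  have hπ3 : (3:ℝ) < Real.pi := Real.pi_gt_three
  set s : ℝ := -Real.log a with hsdef
  have hs0 : 0 < s := by linarith
  have hπs0 : 0 < Real.pi / s := div_pos Real.pi_pos hs0
  have hπs1 : Real.pi / s ≤ 1 := by
    rw [div_le_one hs0]; linarith
  set R : ℝ := Real.arsinh (Real.pi / s) / 2 with hRdef
  have hR0 : 0 < R := by
    have := arsinh_pos hπs0
    rw [hRdef]; linarith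
  have hR1 : R ≤ 1 := by
    have := arsinh_le_self hπs0.le
    rw [hRdef]; linarith
  have hRlow : Real.pi/(4*s) ≤ R := by
    have := arsinh_ge_half hπs0.le hπs1
    rw [hRdef]
    rw [show Real.pi/(4*s) = (Real.pi/s)/4 by ring]
    linarith
  have htanh : 2/9 * R ≤ Real.tanh R := tanh_ge hR0.le hR1
  have hFlow : Real.pi/(18*s) ≤ fridman puncturedDisk z := by
    have h1 := fridman_ge hz
    rw [← hadef, ← hsdef, ← hRdef] at h1
    calc Real.pi/(18*s) = 2/9 * (Real.pi/(4*s)) := by ring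
    _ ≤ 2/9 * R := by linarith
    _ ≤ Real.tanh R := htanh
    _ ≤ fridman puncturedDisk z := h1
  have hFpos : 0 < fridman puncturedDisk z :=
    lt_of_lt_of_le (by positivity) hFlow
  have hsq : squeezing puncturedDisk z = a := squeezing_eq hz
  constructor
  · apply div_nonneg _ hFpos.le
    rw [hsq]; exact ha0.le
  · have hq1 : squeezing puncturedDisk z / fridman puncturedDisk z
        ≤ a / (Real.pi/(18*s)) := by
      rw [hsq]
      exact div_le_div_of_nonneg_left ha0.le (by positivity) hFlow
    have hsqrt0 : 0 < Real.sqrt a := Real.sqrt_pos.mpr ha0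
    have hlogb : s ≤ 2 / Real.sqrt a := by
      have h1 : Real.log (Real.sqrt a) = Real.log a / 2 := Real.log_sqrt ha0.le
      have h2 : Real.log (Real.sqrt a)⁻¹ ≤ (Real.sqrt a)⁻¹ - 1 :=
        Real.log_le_sub_one_of_pos (by positivity)
      rw [Real.log_inv] at h2
      have h3 : s = -2 * Real.log (Real.sqrt a) := by rw [h1, hsdef]; ring
      rw [h3]
      calc -2 * Real.log (Real.sqrt a) ≤ 2 * ((Real.sqrt a)⁻¹ - 1) := by linarith
      _ ≤ 2 / Real.sqrt a := by
          rw [div_eq_mul_inv]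
          linarith
    have hasqrt : a / Real.sqrt a = Real.sqrt a := by
      rw [div_eq_iff hsqrt0.ne', Real.mul_self_sqrt ha0.le]
    calc squeezing puncturedDisk z / fridman puncturedDisk z
        ≤ a / (Real.pi/(18*s)) := hq1
    _ = 18 * a * s / Real.pi := by field_simp
    _ ≤ 18 * a * s / 3 := by
        apply div_le_div_of_nonneg_left _ (by norm_num) (by linarith)
        positivity
    _ = 6 * a * s := by ring
    _ ≤ 6 * a * (2 / Real.sqrt a) := by
        apply mul_le_mul_of_nonneg_left hlogb
        positivity
    _ = 12 * (a / Real.sqrt a) := by ring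
    _ = 12 * Real.sqrt a := by rw [hasqrt]

end S8


open Set Metric Filter

/-- On the punctured unit disk, there is `δ > 0` such that the quotient invariant
`m_{Δ*}(z) = s_{Δ*}(z)/e_{Δ*}(z)` is `< 1` for `0 < |z| < δ`; moreover
`m_{Δ*}(z) → 0` as `z → 0` within `Δ*`. -/
theorem quotient_invariant_puncturedDisk :
    (∃ δ > (0:ℝ), ∀ z : ℂ, 0 < ‖z‖ → ‖z‖ < δ →
      squeezing puncturedDisk z / fridman puncturedDisk z < 1) ∧
    Tendsto (fun z : ℂ => squeezing puncturedDisk z / fridman puncturedDisk z)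
      (nhdsWithin 0 puncturedDisk) (nhds 0) := by
  have hexp1 : Real.exp (-Real.pi) < 1 := by
    rw [Real.exp_lt_one_iff]
    have := Real.pi_pos
    linarith
  have hmemD : ∀ z : ℂ, 0 < ‖z‖ → ‖z‖ < Real.exp (-Real.pi) →
      z ∈ puncturedDisk := by
    intro z h1 h2
    rw [mem_punctured_iff]
    exact ⟨lt_trans h2 hexp1, fun h => by rw [h] at h1; simp at h1⟩
  constructor
  · refine ⟨min (Real.exp (-Real.pi)) (1/400), lt_min (Real.exp_pos _) (by norm_num), ?_⟩
    intro z h0 hδ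
    have h1 : ‖z‖ < Real.exp (-Real.pi) := lt_of_lt_of_le hδ (min_le_left _ _)
    have h2 : ‖z‖ < 1/400 := lt_of_lt_of_le hδ (min_le_right _ _)
    have hzD := hmemD z h0 h1
    obtain ⟨_, hub⟩ := quotient_bound hzD h1
    have hsqrt : Real.sqrt (‖z‖) < 1/20 := by
      have h3 : ‖z‖ < (1/20:ℝ)^2 := by norm_num at h2 ⊢; linarith
      calc Real.sqrt (‖z‖) < Real.sqrt ((1/20:ℝ)^2) :=
            Real.sqrt_lt_sqrt (norm_nonneg z) h3
      _ = 1/20 := Real.sqrt_sq (by norm_num)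
    calc squeezing puncturedDisk z / fridman puncturedDisk z
        ≤ 12 * Real.sqrt (‖z‖) := hub
    _ < 12 * (1/20) := by linarith
    _ < 1 := by norm_num
  · have hupper : Tendsto (fun z : ℂ => 12 * Real.sqrt (‖z‖))
        (nhdsWithin 0 puncturedDisk) (nhds 0) := by
      have hcont : Continuous (fun z : ℂ => 12 * Real.sqrt (‖z‖)) :=
        continuous_const.mul (Real.continuous_sqrt.comp continuous_norm)
      have h0 : (fun z : ℂ => 12 * Real.sqrt (‖z‖)) 0 = 0 := by simp
      exact (hcont.tendsto' 0 0 h0).mono_left nhdsWithin_le_nhds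
    have hsmall_ev : ∀ᶠ z : ℂ in nhdsWithin 0 puncturedDisk,
        ‖z‖ < Real.exp (-Real.pi) := by
      apply Filter.Eventually.filter_mono nhdsWithin_le_nhds
      refine Metric.eventually_nhds_iff.mpr ⟨Real.exp (-Real.pi), Real.exp_pos _, ?_⟩
      intro y hy
      rw [Complex.dist_eq, sub_zero] at hy
      exact hy
    have hmem_ev : ∀ᶠ z : ℂ in nhdsWithin 0 puncturedDisk, z ∈ puncturedDisk :=
      eventually_nhdsWithin_of_forall (fun z hz => hz)
    apply tendsto_of_tendsto_of_tendsto_of_le_of_le' tendsto_const_nhds hupper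
    · filter_upwards [hsmall_ev, hmem_ev] with z h1 h2
      exact (quotient_bound h2 h1).1
    · filter_upwards [hsmall_ev, hmem_ev] with z h1 h2
      exact (quotient_bound h2 h1).2
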